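/- arXiv:math/0405321 — 11 statements merged into one kernel-verified Lean document; each statement's English description precedes it below -/
import Mathlib

section
/- Let x₁, x₂, y₁, …, y_i be integers with x₁ ≠ 0 and gcd(x₁, x₂, y₁, …, y_i) = d. Then there exist integers α₁, …, α_i such that gcd(x₁, x₂ + α₁y₁ + ⋯ + α_iy_i) = d. -/
private lemma gcd_univ_succ (n : ℕ) (f : Fin (n + 1) → ℕ) :
    Finset.univ.gcd f = Nat.gcd (f 0) (Finset.univ.gcd (fun j : Fin n => f j.succ)) := by
  rw [Fin.univ_succ, Finset.cons_eq_insert, Finset.gcd_insert, Finset.gcd_def, Finset.gcd_def]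
  simp [Multiset.map_map, Function.comp]
  rfl

private lemma key (a b c : ℤ) (ha : a ≠ 0) :
    ∃ k : ℤ, Int.gcd a (b + k * c) = Nat.gcd (Int.gcd a b) c.natAbs := by
  set g : ℕ := Nat.gcd (Int.gcd a b) c.natAbs with hgdef
  have hgab : g ∣ Int.gcd a b := Nat.gcd_dvd_left _ _
  have hga : (g : ℤ) ∣ a :=
    dvd_trans (Int.natCast_dvd_natCast.mpr hgab) (Int.gcd_dvd_left _ _)
  have hgb : (g : ℤ) ∣ b :=
    dvd_trans (Int.natCast_dvd_natCast.mpr hgab) (Int.gcd_dvd_right _ _)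
  have hgc : (g : ℤ) ∣ c := by
    have := Int.natCast_dvd_natCast.mpr (Nat.gcd_dvd_right (Int.gcd a b) c.natAbs)
    exact (Int.natAbs_dvd.mp (Int.dvd_natAbs.mp this))
  obtain ⟨a', ha'⟩ := hga
  obtain ⟨b', hb'⟩ := hgb
  obtain ⟨c', hc'⟩ := hgc
  have hg0 : g ≠ 0 := by
    intro h
    rw [hgdef] at h
    have := Nat.eq_zero_of_gcd_eq_zero_left h
    exact ha (Int.gcd_eq_zero_iff.mp this).1
  have ha'0 : a' ≠ 0 := by
    intro h; apply ha; rw [ha', h, mul_zero]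
  -- gcd(a,b) = g * gcd(a',b') ; |c| = g * |c'|
  have hab : Int.gcd a b = g * Int.gcd a' b' := by
    rw [ha', hb', Int.gcd_mul_left, Int.natAbs_natCast]
  have hcc : c.natAbs = g * c'.natAbs := by
    rw [hc', Int.natAbs_mul, Int.natAbs_natCast]
  have hcop : Nat.gcd (Int.gcd a' b') c'.natAbs = 1 := by
    have : g = g * Nat.gcd (Int.gcd a' b') c'.natAbs := by
      conv_lhs => rw [hgdef, hab, hcc, Nat.gcd_mul_left]
    have := mul_left_cancel₀ hg0 (this.symm.trans (mul_one g).symm)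
    exact this
  -- the coefficient
  set S : Finset ℕ := a'.natAbs.primeFactors.filter (fun p => ¬ ((p : ℤ) ∣ b')) with hS
  set k : ℤ := ((∏ p ∈ S, p : ℕ) : ℤ) with hk
  refine ⟨k, ?_⟩
  have hmain : Int.gcd a' (b' + k * c') = 1 := by
    by_contra hne
    obtain ⟨q, hq, hqd⟩ := Nat.exists_prime_and_dvd hne
    have hqa : (q : ℤ) ∣ a' :=
      dvd_trans (Int.natCast_dvd_natCast.mpr hqd) (Int.gcd_dvd_left _ _)
    have hqs : (q : ℤ) ∣ b' + k * c' :=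
      dvd_trans (Int.natCast_dvd_natCast.mpr hqd) (Int.gcd_dvd_right _ _)
    by_cases hqb : (q : ℤ) ∣ b'
    · -- q ∤ k and q ∤ c'
      have hqc : ¬ (q : ℤ) ∣ c' := by
        intro h
        have h1 : q ∣ Int.gcd a' b' := Int.natCast_dvd_natCast.mp (Int.dvd_coe_gcd hqa hqb)
        have h2 : q ∣ c'.natAbs := Int.natCast_dvd_natCast.mp (Int.dvd_natAbs.mpr h)
        have h3 := Nat.dvd_gcd h1 h2
        rw [hcop] at h3
        exact hq.ne_one (Nat.eq_one_of_dvd_one h3)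
      have hqk : ¬ (q : ℤ) ∣ k := by
        intro h
        have h' : q ∣ ∏ p ∈ S, p := Int.natCast_dvd_natCast.mp (by rwa [hk] at h)
        obtain ⟨p, hpS, hqp⟩ := (hq.prime.dvd_finset_prod_iff _).mp h'
        have hpprime : p.Prime := Nat.prime_of_mem_primeFactors (Finset.mem_filter.mp hpS).1
        have : q = p := (Nat.prime_dvd_prime_iff_eq hq hpprime).mp hqp
        subst this
        exact (Finset.mem_filter.mp hpS).2 hqb
      have : (q : ℤ) ∣ k * c' := (dvd_add_right hqb).mp hqs
      rcases (Nat.prime_iff_prime_int.mp hq).dvd_mul.mp this with h | h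
      · exact hqk h
      · exact hqc h
    · -- q ∈ S so q ∣ k
      have hqS : q ∈ S := by
        rw [hS, Finset.mem_filter]
        refine ⟨Nat.mem_primeFactors.mpr ⟨hq, ?_, by simpa using ha'0⟩, hqb⟩
        exact Int.natCast_dvd_natCast.mp (Int.dvd_natAbs.mpr hqa)
      have hqk : (q : ℤ) ∣ k := by
        rw [hk]
        exact_mod_cast Int.natCast_dvd_natCast.mpr (Finset.dvd_prod_of_mem _ hqS)
      have : (q : ℤ) ∣ b' := (dvd_add_left (hqk.mul_right c')).mp hqs
      exact hqb this
  -- conclude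
  have : b + k * c = (g : ℤ) * (b' + k * c') := by rw [hb', hc']; ring
  rw [ha', this, Int.gcd_mul_left, Int.natAbs_natCast, hmain, mul_one]

/-- If `gcd(x₁, x₂, y₁, …, yᵢ) = d` with `x₁ ≠ 0`, then there are integers
`α₁, …, αᵢ` with `gcd(x₁, x₂ + α₁ y₁ + ⋯ + αᵢ yᵢ) = d`. -/
theorem gcd_lemma (x₁ x₂ : ℤ) (i : ℕ) (y : Fin i → ℤ) (hx : x₁ ≠ 0) (d : ℕ)
    (hd : Nat.gcd (Int.gcd x₁ x₂) (Finset.univ.gcd fun j => (y j).natAbs) = d) :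
    ∃ α : Fin i → ℤ, Int.gcd x₁ (x₂ + ∑ j, α j * y j) = d := by
  subst hd
  induction i generalizing x₂ with
  | zero =>
      exact ⟨fun j => 0, by simp⟩
  | succ n ih =>
      obtain ⟨α', hα'⟩ := ih (x₂) (fun j => y j.succ)
      obtain ⟨k, hk⟩ := key x₁ (x₂ + ∑ j : Fin n, α' j * y j.succ) (y 0) hx
      refine ⟨Fin.cons k α', ?_⟩
      rw [Fin.sum_univ_succ]
      simp only [Fin.cons_zero, Fin.cons_succ]
      have : x₂ + (k * y 0 + ∑ j : Fin n, α' j * y j.succ)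
          = (x₂ + ∑ j : Fin n, α' j * y j.succ) + k * y 0 := by ring
      rw [this, hk, hα', gcd_univ_succ n (fun j => (y j).natAbs),
        Nat.gcd_comm ((y 0).natAbs), Nat.gcd_assoc]
end

section
/- Fix positive integers d₁, …, d_{g-1} and set δ(j,i) := ∏_{n=j}^{i-1} d_n for j < i. Let 𝕊𝔻 be the set of matrices S in SL(g,ℤ) such that δ(j,i) divides s_{ij} whenever j < i. Then for every S ∈ 𝕊𝔻, the inverse matrix S⁻¹ also lies in 𝕊𝔻; consequently 𝕊𝔻 is a subgroup of SL(g,ℤ). -/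
/-- If `S ∈ SL(g,ℤ)` satisfies the triangular divisibility condition
`d_{j+1}⋯d_i ∣ S i j` for `j < i`, then so does its inverse; in particular the
set `𝕊𝔻(Δ)` is closed under inversion (and hence a subgroup of `SL(g,ℤ)`). -/
theorem triangularDiv_inv (g : ℕ) (hg : 1 ≤ g) (d : ℕ → ℕ) (hd : ∀ n, 0 < d n)
    (S : Matrix (Fin g) (Fin g) ℤ) (hdet : S.det = 1)
    (hS : ∀ i j : Fin g, (j : ℕ) < (i : ℕ) →
      ((∏ n ∈ Finset.Icc ((j : ℕ) + 1) (i : ℕ), d n : ℕ) : ℤ) ∣ S i j) :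
    S⁻¹.det = 1 ∧ S * S⁻¹ = 1 ∧ S⁻¹ * S = 1 ∧
      ∀ i j : Fin g, (j : ℕ) < (i : ℕ) →
        ((∏ n ∈ Finset.Icc ((j : ℕ) + 1) (i : ℕ), d n : ℕ) : ℤ) ∣ S⁻¹ i j := by
  have hU : IsUnit S.det := by rw [hdet]; exact isUnit_one
  refine ⟨?_, Matrix.mul_nonsing_inv S hU, Matrix.nonsing_inv_mul S hU, ?_⟩
  · rw [Matrix.det_nonsing_inv, hdet]; simp
  -- divisibility part
  -- recast the hypothesis with `Ioc` and integer products
  have hdvd : ∀ i j : Fin g, (j : ℕ) < (i : ℕ) →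
      (∏ n ∈ Finset.Ioc (j : ℕ) (i : ℕ), (d n : ℤ)) ∣ S i j := by
    intro i j hij
    have := hS i j hij
    rwa [Finset.Icc_add_one_left_eq_Ioc, Nat.cast_prod] at this
  -- the diagonal matrix entries
  set P : Fin g → ℤ := fun k => ∏ n ∈ Finset.Ioc 0 (k : ℕ), (d n : ℤ) with hP
  have hPfac : ∀ (j i : Fin g), (j : ℕ) ≤ (i : ℕ) →
      P j * ∏ n ∈ Finset.Ioc (j : ℕ) (i : ℕ), (d n : ℤ) = P i := by
    intro j i h
    exact Finset.prod_Ioc_consecutive _ (Nat.zero_le _) h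
  have hPne : ∀ k : Fin g, P k ≠ 0 := by
    intro k
    refine Finset.prod_ne_zero_iff.2 fun n _ => ?_
    exact_mod_cast (hd n).ne'
  -- the conjugated matrix
  set T : Matrix (Fin g) (Fin g) ℤ := Matrix.of fun i j =>
    if (j : ℕ) < (i : ℕ) then S i j / ∏ n ∈ Finset.Ioc (j : ℕ) (i : ℕ), (d n : ℤ)
    else S i j * ∏ n ∈ Finset.Ioc (i : ℕ) (j : ℕ), (d n : ℤ) with hT
  have key : S * Matrix.diagonal P = Matrix.diagonal P * T := by
    ext i j
    rw [Matrix.mul_diagonal, Matrix.diagonal_mul]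
    by_cases hij : (j : ℕ) < (i : ℕ)
    · have hTij : T i j = S i j / ∏ n ∈ Finset.Ioc (j : ℕ) (i : ℕ), (d n : ℤ) := by
        rw [hT]; exact if_pos hij
      rw [hTij, ← hPfac j i hij.le]
      rw [mul_comm (P j) _, mul_assoc, mul_comm _ (P j), ← mul_assoc, mul_comm _ (P j),
        mul_assoc, Int.mul_ediv_cancel' (hdvd i j hij), mul_comm]
    · have hle : (i : ℕ) ≤ (j : ℕ) := Nat.le_of_not_lt hij
      have hTij : T i j = S i j * ∏ n ∈ Finset.Ioc (i : ℕ) (j : ℕ), (d n : ℤ) := by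
        rw [hT]; exact if_neg hij
      rw [hTij, ← hPfac i j hle]; ring
  -- determinant of T is 1
  have hdetD : (Matrix.diagonal P).det ≠ 0 := by
    rw [Matrix.det_diagonal]
    exact Finset.prod_ne_zero_iff.2 fun k _ => hPne k
  have hdetT : T.det = 1 := by
    have := congrArg Matrix.det key
    rw [Matrix.det_mul, Matrix.det_mul, hdet, one_mul] at this
    nth_rewrite 1 [← mul_one (Matrix.diagonal P).det] at this
    exact (mul_left_cancel₀ hdetD this).symm
  -- S * (diagonal P * adjugate T) = diagonal P
  have h1 : S * (Matrix.diagonal P * T.adjugate) = Matrix.diagonal P := by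
    rw [← Matrix.mul_assoc, key, Matrix.mul_assoc, Matrix.mul_adjugate, hdetT, one_smul,
      Matrix.mul_one]
  have h2 : S⁻¹ * Matrix.diagonal P = Matrix.diagonal P * T.adjugate := by
    calc S⁻¹ * Matrix.diagonal P
        = S⁻¹ * (S * (Matrix.diagonal P * T.adjugate)) := by rw [h1]
      _ = (S⁻¹ * S) * (Matrix.diagonal P * T.adjugate) := by rw [Matrix.mul_assoc]
      _ = Matrix.diagonal P * T.adjugate := by rw [Matrix.nonsing_inv_mul S hU, Matrix.one_mul]
  intro i j hij
  have hentry := congrFun (congrFun h2 i) j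
  rw [Matrix.mul_diagonal, Matrix.diagonal_mul] at hentry
  -- S⁻¹ i j * P j = P i * adjugate T i j = P j * δ * adj
  rw [← hPfac j i hij.le] at hentry
  have hcancel : S⁻¹ i j =
      (∏ n ∈ Finset.Ioc (j : ℕ) (i : ℕ), (d n : ℤ)) * T.adjugate i j := by
    apply mul_left_cancel₀ (hPne j)
    rw [mul_comm (P j) (S⁻¹ i j), hentry]; ring
  rw [Finset.Icc_add_one_left_eq_Ioc, Nat.cast_prod, hcancel]
  exact Dvd.intro _ rfl
end

section
/- Let e₁=1 and e_{i+1} = e_i·d_i with positive integers d_i, and let v ∈ ℤ^{2g}. Define recursively the divisors D_i(v) := gcd( d_i, gcd_{j=1}^{i} ( gcd(v_j, v_{g+j}) / (D_j(v)·D_{j+1}(v)⋯D_{i-1}(v)) ) ) for i = 1,…,g−1 (so D₁(v) = gcd(d₁, v₁, v_{g+1})). Then the ideal (D_i(v)) ⊆ ℤ equals the ideal ( d_i, (v,Λ) / (D₁(v)⋯D_{i-1}(v)) ), where (v,Λ) = ( e₁v₁, e₂v₂, …, e_g v_g, e₁v_{g+1}, …, e_g v_{2g} ) as an ideal of ℤ.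 -/
/-- The divisors `D_i(v)` of a vector `v ∈ ℤ^{2g}` (entries indexed `1,…,2g`),
for the polarisation type `(1, d₁, d₁d₂, …, d₁⋯d_{g-1})`:
`D_i = gcd(d_i, gcd_{j=1}^{i} gcd(v_j, v_{g+j}) / (D_j⋯D_{i-1}))`. -/
def paraD (g : ℕ) (d : ℕ → ℕ) (v : ℕ → ℤ) : ℕ → ℕ
  | i => Nat.gcd (d i) ((Finset.Icc 1 i).attach.gcd fun j =>
      Int.gcd (v j.1) (v (g + j.1)) / ∏ n ∈ (Finset.Ico j.1 i).attach, paraD g d v n.1)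
  termination_by i => i
  decreasing_by
    exact (Finset.mem_Ico.mp n.2).2

namespace ParaDIdealAux

open Finset

theorem gcd_attach' (s : Finset ℕ) (f : ℕ → ℕ) :
    s.attach.gcd (fun j => f j.1) = s.gcd f := by
  conv_rhs => rw [← Finset.attach_image_val (s := s), Finset.gcd_image]
  rfl

theorem paraD_eq (g : ℕ) (d : ℕ → ℕ) (v : ℕ → ℤ) (i : ℕ) :
    paraD g d v i = Nat.gcd (d i) ((Finset.Icc 1 i).gcd fun j =>
      Int.gcd (v j) (v (g + j)) / ∏ n ∈ Finset.Ico j i, paraD g d v n) := by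
  rw [paraD]
  congr 1
  rw [← gcd_attach' (Finset.Icc 1 i)]
  congr 1
  funext j
  congr 1
  exact Finset.prod_attach _ _

variable {g : ℕ} {d : ℕ → ℕ} {v : ℕ → ℤ}

theorem paraD_pos (hd : ∀ n, 0 < d n) (i : ℕ) : 0 < paraD g d v i := by
  rw [paraD_eq]; exact Nat.gcd_pos_of_pos_left _ (hd i)

theorem paraD_dvd_d (i : ℕ) : paraD g d v i ∣ d i := by
  rw [paraD_eq]; exact Nat.gcd_dvd_left _ _

theorem paraD_dvd_quot {i j : ℕ} (h1 : 1 ≤ j) (h2 : j ≤ i) :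
    paraD g d v i ∣ Int.gcd (v j) (v (g + j)) / ∏ n ∈ Finset.Ico j i, paraD g d v n := by
  rw [paraD_eq]
  exact dvd_trans (Nat.gcd_dvd_right _ _) (Finset.gcd_dvd (mem_Icc.mpr ⟨h1, h2⟩))

theorem prod_paraD_pos (hd : ∀ n, 0 < d n) (j i : ℕ) :
    0 < ∏ n ∈ Finset.Ico j i, paraD g d v n :=
  Finset.prod_pos fun n _ => paraD_pos hd n

theorem prod_paraD_dvd (hd : ∀ n, 0 < d n) :
    ∀ i j, 1 ≤ j → j ≤ i →
      (∏ n ∈ Finset.Ico j i, paraD g d v n) ∣ Int.gcd (v j) (v (g + j)) := by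
  intro i
  induction i with
  | zero => intro j h1 h2; omega
  | succ i ih =>
    intro j h1 h2
    rcases eq_or_lt_of_le h2 with rfl | h2'
    · simp
    · have hji : j ≤ i := Nat.lt_succ_iff.mp h2'
      rw [Finset.prod_Ico_succ_top hji]
      exact (Nat.dvd_div_iff_mul_dvd (ih j h1 hji)).mp (paraD_dvd_quot h1 hji)

theorem G_eq (hd : ∀ n, 0 < d n) {i j : ℕ} (h1 : 1 ≤ j) (h2 : j ≤ i) :
    (∏ n ∈ Finset.Ico j i, paraD g d v n) *
      (Int.gcd (v j) (v (g + j)) / ∏ n ∈ Finset.Ico j i, paraD g d v n)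
      = Int.gcd (v j) (v (g + j)) :=
  Nat.mul_div_cancel' (prod_paraD_dvd hd i j h1 h2)

/-- splitting of the exact quotient along an intermediate index -/
theorem quot_split (hd : ∀ n, 0 < d n) {j n i : ℕ} (h1 : 1 ≤ j) (h2 : j ≤ n) (h3 : n ≤ i) :
    Int.gcd (v j) (v (g + j)) / ∏ m ∈ Finset.Ico j n, paraD g d v m
      = (∏ m ∈ Finset.Ico n i, paraD g d v m) *
        (Int.gcd (v j) (v (g + j)) / ∏ m ∈ Finset.Ico j i, paraD g d v m) := by
  have hsplit : (∏ m ∈ Finset.Ico j n, paraD g d v m) *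
      (∏ m ∈ Finset.Ico n i, paraD g d v m) = ∏ m ∈ Finset.Ico j i, paraD g d v m :=
    Finset.prod_Ico_consecutive _ h2 h3
  conv_lhs => rw [← G_eq hd h1 (h2.trans h3), ← hsplit, mul_assoc]
  rw [Nat.mul_div_cancel_left _ (prod_paraD_pos hd j n), hsplit]

theorem prod_d_eq (j : ℕ) :
    ∏ n ∈ Finset.Ico 1 j, d n
      = (∏ n ∈ Finset.Ico 1 j, paraD g d v n) *
        ∏ n ∈ Finset.Ico 1 j, (d n / paraD g d v n) := by
  rw [← Finset.prod_mul_distrib]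
  exact Finset.prod_congr rfl fun n _ => (Nat.mul_div_cancel' (paraD_dvd_d n)).symm

/-- the generator of the ideal `(v,Λ)/(D₁⋯D_{i-1})`, case `j ≤ i` -/
theorem quotF_le (hd : ∀ n, 0 < d n) {j i : ℕ} (h1 : 1 ≤ j) (h2 : j ≤ i) :
    (∏ n ∈ Finset.Ico 1 j, d n) * Int.gcd (v j) (v (g + j)) /
        ∏ n ∈ Finset.Ico 1 i, paraD g d v n
      = (∏ n ∈ Finset.Ico 1 j, (d n / paraD g d v n)) *
        (Int.gcd (v j) (v (g + j)) / ∏ n ∈ Finset.Ico j i, paraD g d v n) := by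
  have hsplit : (∏ m ∈ Finset.Ico 1 j, paraD g d v m) *
      (∏ m ∈ Finset.Ico j i, paraD g d v m) = ∏ m ∈ Finset.Ico 1 i, paraD g d v m :=
    Finset.prod_Ico_consecutive _ h1 h2
  rw [prod_d_eq (v := v)]
  conv_lhs => rw [← G_eq hd h1 h2]
  rw [mul_mul_mul_comm, hsplit, Nat.mul_div_cancel_left _ (prod_paraD_pos hd 1 i)]

/-- the generator of the ideal `(v,Λ)/(D₁⋯D_{i-1})`, case `i < j` -/
theorem quotF_gt (hd : ∀ n, 0 < d n) {j i : ℕ} (h1 : 1 ≤ i) (h2 : i < j) :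
    (∏ n ∈ Finset.Ico 1 j, d n) * Int.gcd (v j) (v (g + j)) /
        ∏ n ∈ Finset.Ico 1 i, paraD g d v n
      = (∏ n ∈ Finset.Ico 1 i, (d n / paraD g d v n)) *
        ((∏ n ∈ Finset.Ico i j, d n) * Int.gcd (v j) (v (g + j))) := by
  rw [← Finset.prod_Ico_consecutive d h1 (le_of_lt h2), prod_d_eq (v := v)]
  have : (∏ m ∈ Finset.Ico 1 i, paraD g d v m) *
        (∏ n ∈ Finset.Ico 1 i, (d n / paraD g d v n)) *
        (∏ n ∈ Finset.Ico i j, d n) * Int.gcd (v j) (v (g + j))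
      = (∏ m ∈ Finset.Ico 1 i, paraD g d v m) *
        ((∏ n ∈ Finset.Ico 1 i, (d n / paraD g d v n)) *
          ((∏ n ∈ Finset.Ico i j, d n) * Int.gcd (v j) (v (g + j)))) := by ring
  rw [this, Nat.mul_div_cancel_left _ (prod_paraD_pos hd 1 i)]

theorem Icc_pred_eq (j : ℕ) (h : 1 ≤ j) : Finset.Icc 1 (j - 1) = Finset.Ico 1 j := by
  rw [← Finset.Ico_add_one_right_eq_Icc]
  congr 1
  omega

end ParaDIdealAux

open ParaDIdealAux Finset in
/-- The ideal `(D_i(v))` equals `(d_i, (v,Λ)/(D₁⋯D_{i-1}))`, where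
`(v,Λ) = (e₁v₁,…,e_g v_g, e₁v_{g+1},…, e_g v_{2g})` with `e_j = d₁⋯d_{j-1}`;
stated as an equality of (nonnegative) generators. -/
theorem paraD_eq_ideal (g : ℕ) (hg : 1 ≤ g) (d : ℕ → ℕ) (hd : ∀ n, 0 < d n)
    (v : ℕ → ℤ) (hv : (Finset.Icc 1 (2 * g)).gcd (fun j => (v j).natAbs) = 1)
    (i : ℕ) (hi1 : 1 ≤ i) (hi2 : i ≤ g - 1) :
    paraD g d v i =
      Nat.gcd (d i) ((Finset.Icc 1 g).gcd fun j =>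
        ((∏ n ∈ Finset.Icc 1 (j - 1), d n) * Int.gcd (v j) (v (g + j))) /
          ∏ n ∈ Finset.Ico 1 i, paraD g d v n) := by
  classical
  have hig : i < g := by omega
  set H : ℕ := Nat.gcd (d i) ((Finset.Icc 1 g).gcd fun j =>
      ((∏ n ∈ Finset.Icc 1 (j - 1), d n) * Int.gcd (v j) (v (g + j))) /
        ∏ n ∈ Finset.Ico 1 i, paraD g d v n) with hHdef
  have hHd : H ∣ d i := Nat.gcd_dvd_left _ _
  -- H divides each generator, rewritten in `Ico` form
  have hHgen : ∀ j, 1 ≤ j → j ≤ g →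
      H ∣ (∏ n ∈ Finset.Ico 1 j, d n) * Int.gcd (v j) (v (g + j)) /
        ∏ n ∈ Finset.Ico 1 i, paraD g d v n := by
    intro j h1 h2
    have h0 : H ∣ (Finset.Icc 1 g).gcd (fun j =>
        ((∏ n ∈ Finset.Icc 1 (j - 1), d n) * Int.gcd (v j) (v (g + j))) /
          ∏ n ∈ Finset.Ico 1 i, paraD g d v n) := Nat.gcd_dvd_right _ _
    have h1' := h0.trans (Finset.gcd_dvd (mem_Icc.mpr ⟨h1, h2⟩))
    rwa [Icc_pred_eq j h1] at h1'
  apply Nat.dvd_antisymm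
  · -- paraD i ∣ H
    apply Nat.dvd_gcd (paraD_dvd_d i)
    apply Finset.dvd_gcd
    intro j hj
    obtain ⟨hj1, hjg⟩ := mem_Icc.mp hj
    rw [Icc_pred_eq j hj1]
    by_cases hji : j ≤ i
    · rw [quotF_le hd hj1 hji]
      exact Dvd.dvd.mul_left (paraD_dvd_quot hj1 hji) _
    · rw [quotF_gt hd hi1 (lt_of_not_ge hji)]
      refine Dvd.dvd.mul_left (Dvd.dvd.mul_right ?_ _) _
      exact (paraD_dvd_d i).trans
        (Finset.dvd_prod_of_mem d (mem_Ico.mpr ⟨le_refl i, lt_of_not_ge hji⟩))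
  · -- H ∣ paraD i : prime by prime
    have hHpos : 0 < H := Nat.gcd_pos_of_pos_left _ (hd i)
    have hH0 : H ≠ 0 := hHpos.ne'
    have hD0 : paraD g d v i ≠ 0 := (paraD_pos hd i).ne'
    -- the key per-prime fact
    have key : ∀ p k : ℕ, p.Prime → p ^ k ∣ H → ∀ j, 1 ≤ j → j ≤ i →
        p ^ k ∣ Int.gcd (v j) (v (g + j)) / ∏ n ∈ Finset.Ico j i, paraD g d v n := by
      intro p k hp hpk j hj1 hji
      by_cases hex : ∃ n, n ∈ Finset.Ico 1 i ∧ p ∣ d n / paraD g d v n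
      · -- Case B: some earlier `d_n/D_n` is divisible by p; then p ∤ H, i.e. k = 0
        have hk0 : k = 0 := by
          by_contra hk
          set n := Nat.find hex with hn
          obtain ⟨hnmem, hpr⟩ := Nat.find_spec hex
          obtain ⟨hn1, hni⟩ := mem_Ico.mp hnmem
          set x := (paraD g d v n).factorization p with hx
          have hDn0 : paraD g d v n ≠ 0 := (paraD_pos hd n).ne'
          have hx1 : p ^ x ∣ paraD g d v n := Nat.ordProj_dvd _ _
          have hx2 : ¬ p ^ (x + 1) ∣ paraD g d v n :=
            Nat.pow_succ_factorization_not_dvd hDn0 hp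
          have hdn : p ^ (x + 1) ∣ d n := by
            have h1 : paraD g d v n * p ∣ d n :=
              (Nat.dvd_div_iff_mul_dvd (paraD_dvd_d n)).mp hpr
            calc p ^ (x + 1) = p ^ x * p := pow_succ p x
              _ ∣ paraD g d v n * p := mul_dvd_mul hx1 dvd_rfl
              _ ∣ d n := h1
          have hQ : ¬ p ^ (x + 1) ∣ (Finset.Icc 1 n).gcd
              (fun j' => Int.gcd (v j') (v (g + j')) / ∏ m ∈ Finset.Ico j' n, paraD g d v m) := by
            intro hcon
            exact hx2 (by rw [paraD_eq]; exact Nat.dvd_gcd hdn hcon)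
          have hwit : ∃ j' ∈ Finset.Icc 1 n, ¬ p ^ (x + 1) ∣
              Int.gcd (v j') (v (g + j')) / ∏ m ∈ Finset.Ico j' n, paraD g d v m := by
            by_contra hcon
            push_neg at hcon
            exact hQ (Finset.dvd_gcd hcon)
          obtain ⟨j', hj'mem, hj'⟩ := hwit
          obtain ⟨hj'1, hj'n⟩ := mem_Icc.mp hj'mem
          -- p does not divide A_{j'} at level i
          have hnotA : ¬ p ∣ Int.gcd (v j') (v (g + j')) /
              ∏ m ∈ Finset.Ico j' i, paraD g d v m := by
            intro hcon
            apply hj'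
            rw [quot_split hd hj'1 hj'n (le_of_lt hni), pow_succ]
            exact mul_dvd_mul
              (hx1.trans (Finset.dvd_prod_of_mem _ (mem_Ico.mpr ⟨le_refl n, hni⟩))) hcon
          -- p does not divide C_{j'}
          have hnotC : Nat.Coprime p (∏ m ∈ Finset.Ico 1 j', (d m / paraD g d v m)) := by
            apply Nat.Coprime.prod_right
            intro m hm
            obtain ⟨hm1, hmj⟩ := mem_Ico.mp hm
            have hmn : m < n := lt_of_lt_of_le hmj hj'n
            have hmin := Nat.find_min hex hmn
            rw [(Nat.Prime.coprime_iff_not_dvd hp)]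
            intro hdvd
            exact hmin ⟨mem_Ico.mpr ⟨hm1, hmn.trans hni⟩, hdvd⟩
          have hHj : H ∣ (∏ m ∈ Finset.Ico 1 j', (d m / paraD g d v m)) *
              (Int.gcd (v j') (v (g + j')) / ∏ m ∈ Finset.Ico j' i, paraD g d v m) := by
            have h := hHgen j' hj'1 (by omega)
            rwa [quotF_le hd hj'1 (hj'n.trans (le_of_lt hni))] at h
          have hpH : p ∣ H := (dvd_pow_self p hk).trans hpk
          rcases (Nat.Prime.dvd_mul hp).mp (hpH.trans hHj) with h | h
          · exact (Nat.Prime.coprime_iff_not_dvd hp).mp hnotC h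
          · exact hnotA h
        rw [hk0, pow_zero]
        exact one_dvd _
      · -- Case A: no `d_n/D_n` divisible by p; cancel the coprime factor `C_j`
        push_neg at hex
        have hHj : H ∣ (∏ m ∈ Finset.Ico 1 j, (d m / paraD g d v m)) *
            (Int.gcd (v j) (v (g + j)) / ∏ m ∈ Finset.Ico j i, paraD g d v m) := by
          have h := hHgen j hj1 (by omega)
          rwa [quotF_le hd hj1 hji] at h
        have hcop : Nat.Coprime (p ^ k) (∏ m ∈ Finset.Ico 1 j, (d m / paraD g d v m)) := by
          apply Nat.Coprime.pow_left
          apply Nat.Coprime.prod_right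
          intro m hm
          obtain ⟨hm1, hmj⟩ := mem_Ico.mp hm
          rw [Nat.Prime.coprime_iff_not_dvd hp]
          exact hex m (mem_Ico.mpr ⟨hm1, lt_of_lt_of_le hmj hji⟩)
        exact hcop.dvd_of_dvd_mul_left (hpk.trans hHj)
    -- assemble divisibility via factorizations
    rw [← Nat.factorization_le_iff_dvd hH0 hD0]
    intro p
    by_cases hp : p.Prime
    · rw [← Nat.Prime.pow_dvd_iff_le_factorization hp hD0]
      rw [paraD_eq]
      refine Nat.dvd_gcd ((Nat.ordProj_dvd H p).trans hHd) (Finset.dvd_gcd ?_)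
      intro j hj
      obtain ⟨hj1, hji⟩ := mem_Icc.mp hj
      exact key p _ hp (Nat.ordProj_dvd H p) j hj1 hji
    · rw [Nat.factorization_eq_zero_of_not_prime H hp]
      exact Nat.zero_le _
end

section
/- With notation as before (divisors D_i(v) of a primitive vector v ∈ ℤ^{2g} with respect to a polarisation type (1, d₁, …, d₁⋯d_{g-1})): the divisors are invariant under the paramodular group, i.e. D_i(vM) = D_i(v) for all M ∈ Γ̃_pol = { M ∈ SL(2g,ℤ) : MΛMᵀ = Λ } and all i = 1,…,g−1. -/
open Matrix

/-- Reindex a vector `ℤ^g ⊕ ℤ^g` as a one-based sequence of `2g` entries. -/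
def ofSum (g : ℕ) (v : (Fin g ⊕ Fin g) → ℤ) : ℕ → ℤ := fun j =>
  if h : 1 ≤ j ∧ j ≤ g then v (Sum.inl ⟨j - 1, by omega⟩)
  else if h2 : g + 1 ≤ j ∧ j ≤ 2 * g then v (Sum.inr ⟨j - g - 1, by omega⟩)
  else 0

/-- `Δ_i = d₁ ⋯ d_i`. -/
def Dl (d : ℕ → ℕ) (i : ℕ) : ℕ := ∏ n ∈ Finset.Icc 1 i, d n

/-- `G_j = gcd(v_j, v_{g+j})`. -/
def Gv (g : ℕ) (v : ℕ → ℤ) (j : ℕ) : ℕ := Int.gcd (v j) (v (g + j))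

/-- `E_i = gcd(Δ_i, gcd_{j ≤ i} Δ_{j-1} G_j)`; we will show `E_i = D_1 ⋯ D_i`. -/
def Ev (g : ℕ) (d : ℕ → ℕ) (v : ℕ → ℤ) (i : ℕ) : ℕ :=
  Nat.gcd (Dl d i) ((Finset.Icc 1 i).gcd fun j => Dl d (j - 1) * Gv g v j)

lemma paraD_eq (g : ℕ) (d : ℕ → ℕ) (v : ℕ → ℤ) (i : ℕ) :
    paraD g d v i = Nat.gcd (d i) ((Finset.Icc 1 i).gcd fun j =>
      Gv g v j / ∏ n ∈ Finset.Ico j i, paraD g d v n) := by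
  rw [paraD]
  congr 1
  conv_rhs => rw [← Finset.attach_image_val (s := Finset.Icc 1 i), Finset.gcd_image]
  refine Finset.gcd_congr rfl fun j _ => ?_
  simp only [Function.comp]
  rw [← Finset.prod_attach (Finset.Ico (j.1) i) (fun n => paraD g d v n)]
  rfl

lemma Dl_pos (d : ℕ → ℕ) (hd : ∀ n, 0 < d n) (i : ℕ) : 0 < Dl d i :=
  Finset.prod_pos fun n _ => hd n

lemma Dl_succ (d : ℕ → ℕ) (i : ℕ) : Dl d (i + 1) = Dl d i * d (i + 1) := by
  rw [Dl, Dl, ← Finset.prod_Icc_succ_top (by omega : 1 ≤ i + 1)]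

lemma Dl_dvd_Dl (d : ℕ → ℕ) {i j : ℕ} (h : i ≤ j) : Dl d i ∣ Dl d j :=
  Finset.prod_dvd_prod_of_subset _ _ _ (Finset.Icc_subset_Icc_right h)

lemma Ev_pos (g : ℕ) (d : ℕ → ℕ) (hd : ∀ n, 0 < d n) (v : ℕ → ℤ) (i : ℕ) :
    0 < Ev g d v i := Nat.gcd_pos_of_pos_left _ (Dl_pos d hd i)

lemma Ev_dvd_Dl (g : ℕ) (d : ℕ → ℕ) (v : ℕ → ℤ) (i : ℕ) : Ev g d v i ∣ Dl d i :=
  Nat.gcd_dvd_left _ _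

lemma Ev_dvd_term (g : ℕ) (d : ℕ → ℕ) (v : ℕ → ℤ) {i j : ℕ} (h1 : 1 ≤ j) (h2 : j ≤ i) :
    Ev g d v i ∣ Dl d (j - 1) * Gv g v j :=
  (Nat.gcd_dvd_right _ _).trans (Finset.gcd_dvd (Finset.mem_Icc.mpr ⟨h1, h2⟩))

lemma Ev_mul_right (g : ℕ) (d : ℕ → ℕ) (v : ℕ → ℤ) (i c : ℕ) :
    Ev g d v i * c =
      Nat.gcd (Dl d i * c) ((Finset.Icc 1 i).gcd fun j => Dl d (j - 1) * Gv g v j * c) := by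
  rw [Ev, ← Nat.gcd_mul_right, Finset.gcd_mul_right]
  simp

lemma Ev_dvd_Emul (g : ℕ) (d : ℕ → ℕ) (v : ℕ → ℤ) {i j : ℕ} (h1 : 1 ≤ j) (h2 : j - 1 ≤ i) :
    Ev g d v i ∣ Ev g d v (j - 1) * Gv g v j := by
  rcases Nat.lt_or_ge (j - 1) i with h | h
  · -- here j ≤ i
    have hj : j ≤ i := by omega
    rw [Ev_mul_right]
    refine Nat.dvd_gcd (Ev_dvd_term g d v h1 hj) (Finset.dvd_gcd fun k hk => ?_)
    obtain ⟨hk1, hk2⟩ := Finset.mem_Icc.mp hk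
    exact (Ev_dvd_term g d v hk1 (by omega)).mul_right _
  · have : j - 1 = i := by omega
    rw [this]
    exact dvd_mul_right _ _

/-- Telescoping auxiliary. -/
lemma telescope (F D : ℕ → ℕ) (a : ℕ) : ∀ b, a ≤ b →
    (∀ m, a ≤ m → m < b → F (m + 1) = F m * D (m + 1)) →
    F a * ∏ n ∈ Finset.Ico (a + 1) (b + 1), D n = F b := by
  intro b
  induction b with
  | zero => intro h _; interval_cases a; simp
  | succ b ih =>
    intro hab hrec
    rcases Nat.lt_or_ge a (b + 1) with h | h
    · have hab' : a ≤ b := by omega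
      rw [Finset.prod_Ico_succ_top (by omega : a + 1 ≤ b + 1), ← mul_assoc,
        ih hab' (fun m hm1 hm2 => hrec m hm1 (by omega)), ← hrec b hab' (by omega)]
    · have : a = b + 1 := by omega
      subst this
      simp

lemma Finset.gcd_mul_left_aux {s : Finset ℕ} {f : ℕ → ℕ} {a : ℕ} :
    a * s.gcd f = s.gcd fun x => a * f x := by
  rw [Finset.gcd_mul_left]; simp

lemma Ev_gcd_aux (g : ℕ) (d : ℕ → ℕ) (v : ℕ → ℤ) (i : ℕ) (hi : 1 ≤ i) :
    Nat.gcd (Ev g d v (i - 1) * d i)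
      ((Finset.Icc 1 i).gcd fun j => Ev g d v (j - 1) * Gv g v j) = Ev g d v i := by
  have hDl : Dl d (i - 1) * d i = Dl d i := by
    have h2 : i - 1 + 1 = i := by omega
    calc Dl d (i - 1) * d i = Dl d (i - 1) * d (i - 1 + 1) := by rw [h2]
    _ = Dl d (i - 1 + 1) := (Dl_succ d (i - 1)).symm
    _ = Dl d i := by rw [h2]
  apply Nat.dvd_antisymm
  · apply Nat.dvd_gcd
    · rw [← hDl]
      exact (Nat.gcd_dvd_left _ _).trans (mul_dvd_mul_right (Ev_dvd_Dl g d v (i - 1)) _)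
    · refine Finset.dvd_gcd fun j hj => ?_
      exact (Nat.gcd_dvd_right _ _).trans ((Finset.gcd_dvd hj).trans
        (mul_dvd_mul_right (Ev_dvd_Dl g d v (j - 1)) _))
  · apply Nat.dvd_gcd
    · rw [Ev_mul_right g d v (i - 1) (d i), hDl]
      apply Nat.dvd_gcd (Ev_dvd_Dl g d v i)
      refine Finset.dvd_gcd fun k hk => ?_
      obtain ⟨hk1, hk2⟩ := Finset.mem_Icc.mp hk
      exact (Ev_dvd_term g d v hk1 (by omega)).mul_right _
    · refine Finset.dvd_gcd fun j hj => ?_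
      obtain ⟨hj1, hj2⟩ := Finset.mem_Icc.mp hj
      exact Ev_dvd_Emul g d v hj1 (by omega)

lemma Ev_succ (g : ℕ) (d : ℕ → ℕ) (hd : ∀ n, 0 < d n) (v : ℕ → ℤ) :
    ∀ i, 1 ≤ i → Ev g d v i = Ev g d v (i - 1) * paraD g d v i := by
  intro i
  induction i using Nat.strong_induction_on with
  | _ i ih =>
    intro hi
    -- telescoping: for j ∈ Icc 1 i, Ev (j-1) * ∏_{n ∈ Ico j i} paraD n = Ev (i-1)
    have htel : ∀ j, 1 ≤ j → j ≤ i →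
        Ev g d v (j - 1) * ∏ n ∈ Finset.Ico j i, paraD g d v n = Ev g d v (i - 1) := by
      intro j hj1 hj2
      have h1 : j - 1 + 1 = j := by omega
      have h2 : i - 1 + 1 = i := by omega
      have := telescope (Ev g d v) (paraD g d v) (j - 1) (i - 1) (by omega)
        (fun m hm1 hm2 => by
          have := ih (m + 1) (by omega) (by omega)
          simpa using this)
      rw [h1, h2] at this
      exact this
    -- rewrite the inner divisions
    have hdiv : ∀ j, 1 ≤ j → j ≤ i →
        Gv g v j / ∏ n ∈ Finset.Ico j i, paraD g d v n =
          Ev g d v (j - 1) * Gv g v j / Ev g d v (i - 1) := by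
      intro j hj1 hj2
      rw [← htel j hj1 hj2, Nat.mul_div_mul_left _ _ (Ev_pos g d hd v (j - 1))]
    rw [paraD_eq]
    have hgcd : ((Finset.Icc 1 i).gcd fun j =>
        Gv g v j / ∏ n ∈ Finset.Ico j i, paraD g d v n) =
        (Finset.Icc 1 i).gcd fun j => Ev g d v (j - 1) * Gv g v j / Ev g d v (i - 1) := by
      refine Finset.gcd_congr rfl fun j hj => ?_
      obtain ⟨hj1, hj2⟩ := Finset.mem_Icc.mp hj
      exact hdiv j hj1 hj2
    rw [hgcd, ← Nat.gcd_mul_left]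
    have h4 : (Ev g d v (i - 1) *
        (Finset.Icc 1 i).gcd fun j => Ev g d v (j - 1) * Gv g v j / Ev g d v (i - 1)) =
        (Finset.Icc 1 i).gcd fun j => Ev g d v (j - 1) * Gv g v j := by
      rw [Finset.gcd_mul_left_aux]
      refine Finset.gcd_congr rfl fun j hj => ?_
      obtain ⟨hj1, hj2⟩ := Finset.mem_Icc.mp hj
      exact Nat.mul_div_cancel' (Ev_dvd_Emul g d v hj1 (by omega))
    rw [h4, Ev_gcd_aux g d v i hi]

theorem junk : True := trivial

lemma gcd_dvd_gcd_vecMul {n : Type*} [Fintype n] (w : n → ℤ) (P : Matrix n n ℤ) :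
    (Finset.univ.gcd fun k => (w k).natAbs) ∣ Finset.univ.gcd fun k => ((vecMul w P) k).natAbs := by
  refine Finset.dvd_gcd fun k _ => ?_
  have h : ((Finset.univ.gcd fun k => (w k).natAbs : ℕ) : ℤ) ∣ vecMul w P k := by
    unfold Matrix.vecMul dotProduct
    refine Finset.dvd_sum fun j _ => Dvd.dvd.mul_right ?_ _
    exact (Int.natCast_dvd_natCast.mpr (Finset.gcd_dvd (Finset.mem_univ j))).trans
      (Int.natAbs_dvd.mpr dvd_rfl)
  exact Int.natCast_dvd_natCast.mp (Int.dvd_natAbs.mpr h)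

lemma gcd_vecMul_eq {n : Type*} [Fintype n] [DecidableEq n] (w : n → ℤ) (P Q : Matrix n n ℤ)
    (hPQ : P * Q = 1) :
    (Finset.univ.gcd fun k => ((vecMul w P) k).natAbs) =
      Finset.univ.gcd fun k => (w k).natAbs := by
  refine Nat.dvd_antisymm ?_ (gcd_dvd_gcd_vecMul w P)
  have h := gcd_dvd_gcd_vecMul (vecMul w P) Q
  rwa [vecMul_vecMul, hPQ, vecMul_one] at h

lemma vecMul_Lambda (g : ℕ) (d : ℕ → ℕ) (w : (Fin g ⊕ Fin g) → ℤ)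
    (Δ : Matrix (Fin g) (Fin g) ℤ)
    (hΔ : Δ = Matrix.diagonal fun i : Fin g => ((∏ n ∈ Finset.Icc 1 (i : ℕ), d n : ℕ) : ℤ))
    (Λ : Matrix (Fin g ⊕ Fin g) (Fin g ⊕ Fin g) ℤ)
    (hΛ : Λ = Matrix.fromBlocks 0 Δ (-Δ) 0) (k : Fin g) :
    vecMul w Λ (Sum.inl k) = -((Dl d (k : ℕ) : ℤ) * w (Sum.inr k)) ∧
      vecMul w Λ (Sum.inr k) = (Dl d (k : ℕ) : ℤ) * w (Sum.inl k) := by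
  subst hΔ hΛ
  constructor <;>
  · simp [Matrix.vecMul, dotProduct, Fintype.sum_sum_type, Matrix.diagonal, Dl,
      mul_comm, Finset.sum_ite_eq', Finset.mul_sum, mul_ite]

lemma Ev_ofSum (g : ℕ) (d : ℕ → ℕ) (w : (Fin g ⊕ Fin g) → ℤ)
    (Δ : Matrix (Fin g) (Fin g) ℤ)
    (hΔ : Δ = Matrix.diagonal fun i : Fin g => ((∏ n ∈ Finset.Icc 1 (i : ℕ), d n : ℕ) : ℤ))
    (Λ : Matrix (Fin g ⊕ Fin g) (Fin g ⊕ Fin g) ℤ)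
    (hΛ : Λ = Matrix.fromBlocks 0 Δ (-Δ) 0)
    (i : ℕ) (hi : i ≤ g) :
    Ev g d (ofSum g w) i =
      Nat.gcd (Dl d i) (Finset.univ.gcd fun k => ((vecMul w Λ) k).natAbs) := by
  have hterm : ∀ (j : ℕ) (hj1 : 1 ≤ j) (hj2 : j ≤ g),
      Dl d (j - 1) * Gv g (ofSum g w) j =
      Nat.gcd ((vecMul w Λ) (Sum.inl ⟨j - 1, by omega⟩)).natAbs
              ((vecMul w Λ) (Sum.inr ⟨j - 1, by omega⟩)).natAbs := by
    intro j hj1 hj2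
    rw [(vecMul_Lambda g d w Δ hΔ Λ hΛ ⟨j - 1, by omega⟩).1,
      (vecMul_Lambda g d w Δ hΔ Λ hΛ ⟨j - 1, by omega⟩).2]
    have e1 : ofSum g w j = w (Sum.inl ⟨j - 1, by omega⟩) := by
      unfold ofSum; rw [dif_pos ⟨hj1, hj2⟩]
    have e2 : ofSum g w (g + j) = w (Sum.inr ⟨j - 1, by omega⟩) := by
      unfold ofSum
      rw [dif_neg (by omega), dif_pos (show g + 1 ≤ g + j ∧ g + j ≤ 2 * g by omega)]
      congr 1
      exact congrArg Sum.inr (Fin.ext (by simp))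
    rw [Gv, e1, e2]
    simp only [Int.gcd, Int.natAbs_neg, Int.natAbs_mul, Int.natAbs_natCast, Fin.val_mk]
    rw [← Nat.gcd_mul_left, Nat.gcd_comm]
  have hmain : ((Finset.Icc 1 g).gcd fun j => Dl d (j - 1) * Gv g (ofSum g w) j) =
      Finset.univ.gcd fun k => ((vecMul w Λ) k).natAbs := by
    apply Nat.dvd_antisymm
    · refine Finset.dvd_gcd fun k _ => ?_
      match k with
      | Sum.inl k0 =>
        have hmem : (k0 : ℕ) + 1 ∈ Finset.Icc 1 g := Finset.mem_Icc.mpr ⟨by omega, by omega⟩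
        have h : ((Finset.Icc 1 g).gcd fun j => Dl d (j - 1) * Gv g (ofSum g w) j) ∣
            Dl d ((k0 : ℕ) + 1 - 1) * Gv g (ofSum g w) ((k0 : ℕ) + 1) := Finset.gcd_dvd hmem
        rw [hterm ((k0 : ℕ) + 1) (by omega) (by omega)] at h
        refine h.trans ((Nat.gcd_dvd_left _ _).trans ?_)
        have : (⟨(k0 : ℕ) + 1 - 1, by omega⟩ : Fin g) = k0 := Fin.ext (by simp)
        rw [this]
      | Sum.inr k0 =>
        have hmem : (k0 : ℕ) + 1 ∈ Finset.Icc 1 g := Finset.mem_Icc.mpr ⟨by omega, by omega⟩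
        have h : ((Finset.Icc 1 g).gcd fun j => Dl d (j - 1) * Gv g (ofSum g w) j) ∣
            Dl d ((k0 : ℕ) + 1 - 1) * Gv g (ofSum g w) ((k0 : ℕ) + 1) := Finset.gcd_dvd hmem
        rw [hterm ((k0 : ℕ) + 1) (by omega) (by omega)] at h
        refine h.trans ((Nat.gcd_dvd_right _ _).trans ?_)
        have : (⟨(k0 : ℕ) + 1 - 1, by omega⟩ : Fin g) = k0 := Fin.ext (by simp)
        rw [this]
    · refine Finset.dvd_gcd fun j hj => ?_
      obtain ⟨hj1, hj2⟩ := Finset.mem_Icc.mp hj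
      rw [hterm j hj1 hj2]
      exact Nat.dvd_gcd (Finset.gcd_dvd (Finset.mem_univ _)) (Finset.gcd_dvd (Finset.mem_univ _))
  rcases Nat.eq_zero_or_pos i with h0 | h0
  · subst h0
    have : Dl d 0 = 1 := by simp [Dl]
    simp [Ev, this]
  · have hsplit : Finset.Icc 1 i ∪ Finset.Ioc i g = Finset.Icc 1 g := by
      ext x
      simp only [Finset.mem_union, Finset.mem_Icc, Finset.mem_Ioc]
      omega
    have hgcdN : ∀ a b : ℕ, GCDMonoid.gcd a b = Nat.gcd a b := fun _ _ => rfl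
    rw [Ev, ← hmain, ← hsplit, Finset.gcd_union, hgcdN]
    have hY : Dl d i ∣ (Finset.Ioc i g).gcd fun j => Dl d (j - 1) * Gv g (ofSum g w) j :=
      Finset.dvd_gcd fun j hj => by
        obtain ⟨hj1, hj2⟩ := Finset.mem_Ioc.mp hj
        exact (Dl_dvd_Dl d (by omega : i ≤ j - 1)).mul_right _
    rw [Nat.gcd_comm ((Finset.Icc 1 i).gcd _) ((Finset.Ioc i g).gcd _), ← Nat.gcd_assoc,
      Nat.gcd_eq_left hY]

/-- The divisors `D_i` are invariant under the paramodular group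
`Γ̃_pol = { M ∈ SL(2g,ℤ) : MΛMᵀ = Λ }` acting by right multiplication. -/
theorem paraD_invariant (g : ℕ) (hg : 1 ≤ g) (d : ℕ → ℕ) (hd : ∀ n, 0 < d n)
    (Δ : Matrix (Fin g) (Fin g) ℤ)
    (hΔ : Δ = Matrix.diagonal fun i : Fin g => ((∏ n ∈ Finset.Icc 1 (i : ℕ), d n : ℕ) : ℤ))
    (Λ : Matrix (Fin g ⊕ Fin g) (Fin g ⊕ Fin g) ℤ)
    (hΛ : Λ = Matrix.fromBlocks 0 Δ (-Δ) 0)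
    (v : (Fin g ⊕ Fin g) → ℤ)
    (hv : Finset.univ.gcd (fun a => (v a).natAbs) = 1)
    (M : Matrix (Fin g ⊕ Fin g) (Fin g ⊕ Fin g) ℤ)
    (hdet : M.det = 1) (hM : M * Λ * Mᵀ = Λ)
    (i : ℕ) (hi1 : 1 ≤ i) (hi2 : i ≤ g - 1) :
    paraD g d (ofSum g (Matrix.vecMul v M)) i = paraD g d (ofSum g v) i := by
  have hig : i ≤ g := by omega
  have hdetT : IsUnit Mᵀ.det := by
    rw [Matrix.det_transpose, hdet]; exact isUnit_one
  have hMinv : M * Λ = Λ * (Mᵀ)⁻¹ := by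
    have h1 : Mᵀ * (Mᵀ)⁻¹ = 1 := Matrix.mul_nonsing_inv _ hdetT
    calc M * Λ = M * Λ * (Mᵀ * (Mᵀ)⁻¹) := by rw [h1, mul_one]
      _ = (M * Λ * Mᵀ) * (Mᵀ)⁻¹ := by rw [← mul_assoc]
      _ = Λ * (Mᵀ)⁻¹ := by rw [hM]
  have hNinv : (Finset.univ.gcd fun k => ((vecMul (vecMul v M) Λ) k).natAbs)
      = Finset.univ.gcd fun k => ((vecMul v Λ) k).natAbs := by
    have h2 : vecMul (vecMul v M) Λ = vecMul (vecMul v Λ) (Mᵀ)⁻¹ := by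
      rw [vecMul_vecMul, vecMul_vecMul, hMinv]
    rw [h2]
    exact gcd_vecMul_eq _ _ Mᵀ (Matrix.nonsing_inv_mul _ hdetT)
  have key : ∀ m : ℕ, m ≤ g → Ev g d (ofSum g (vecMul v M)) m = Ev g d (ofSum g v) m := by
    intro m hm
    rw [Ev_ofSum g d _ Δ hΔ Λ hΛ m hm, Ev_ofSum g d _ Δ hΔ Λ hΛ m hm, hNinv]
  have h1 := Ev_succ g d hd (ofSum g (vecMul v M)) i hi1
  have h2 := Ev_succ g d hd (ofSum g v) i hi1
  rw [key i hig, key (i - 1) (by omega)] at h1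
  exact Nat.eq_of_mul_eq_mul_left (Ev_pos g d hd _ (i - 1)) (h1.symm.trans h2)
end

section
/- Let v ∈ ℤ^{2g} be primitive with divisors D₁,…,D_{g-1} (D_i | d_i). Then for all 1 ≤ i < j ≤ g−1, gcd(d_i/D_i, D_j) = 1. -/
/-- The defining equation of `paraD`. -/
lemma paraD_def (g : ℕ) (d : ℕ → ℕ) (v : ℕ → ℤ) (i : ℕ) :
    paraD g d v i = Nat.gcd (d i) ((Finset.Icc 1 i).attach.gcd fun j =>
      Int.gcd (v j.1) (v (g + j.1)) / ∏ n ∈ (Finset.Ico j.1 i).attach, paraD g d v n.1) := by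
  rw [paraD]

/-- `D_i` divides each term `gcd(v_k, v_{g+k}) / ∏_{n=k}^{i-1} D_n` for `1 ≤ k ≤ i`. -/
lemma paraD_dvd_term (g : ℕ) (d : ℕ → ℕ) (v : ℕ → ℤ) (i k : ℕ) (hk : 1 ≤ k) (hki : k ≤ i) :
    paraD g d v i ∣ Int.gcd (v k) (v (g + k)) / ∏ n ∈ Finset.Ico k i, paraD g d v n := by
  have h1 := (paraD_def g d v i ▸ Nat.gcd_dvd_right (d i) _)
  have hmem : k ∈ Finset.Icc 1 i := Finset.mem_Icc.mpr ⟨hk, hki⟩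
  have h2 := h1.trans (Finset.gcd_dvd (Finset.mem_attach _ ⟨k, hmem⟩))
  simpa [Finset.prod_attach] using h2

/-- The product `∏_{n=k}^{i-1} D_n` divides `gcd(v_k, v_{g+k})` (exactness of the divisions). -/
lemma prod_paraD_dvd (g : ℕ) (d : ℕ → ℕ) (v : ℕ → ℤ) :
    ∀ i k, 1 ≤ k → (∏ n ∈ Finset.Ico k i, paraD g d v n) ∣ Int.gcd (v k) (v (g + k)) := by
  intro i
  induction i with
  | zero => intro k hk; simp
  | succ i ih =>
    intro k hk
    by_cases hki : k ≤ i
    · rw [Finset.prod_Ico_succ_top hki]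
      exact (Nat.dvd_div_iff_mul_dvd (ih k hk)).mp (paraD_dvd_term g d v i k hk hki)
    · rw [Finset.Ico_eq_empty (by omega)]; simp

/-- Restrictions on the divisors: for a primitive vector `v` and `i < j`,
`gcd(d_i / D_i, D_j) = 1`. -/
theorem paraD_restriction (g : ℕ) (hg : 1 ≤ g) (d : ℕ → ℕ) (hd : ∀ n, 0 < d n)
    (v : ℕ → ℤ) (hv : (Finset.Icc 1 (2 * g)).gcd (fun j => (v j).natAbs) = 1)
    (i j : ℕ) (hi : 1 ≤ i) (hij : i < j) (hj : j ≤ g - 1) :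
    Nat.gcd (d i / paraD g d v i) (paraD g d v j) = 1 := by
  have hDpos : ∀ n, 0 < paraD g d v n := by
    intro n
    rw [paraD_def]
    exact Nat.gcd_pos_of_pos_left _ (hd n)
  have main : ∀ e : ℕ, e ∣ d i / paraD g d v i → e ∣ paraD g d v j → e ∣ 1 := by
    intro e he1 he2
    have hDd : paraD g d v i ∣ d i := paraD_def g d v i ▸ Nat.gcd_dvd_left (d i) _
    have hdi : paraD g d v i * e ∣ d i := (Nat.dvd_div_iff_mul_dvd hDd).mp he1
    have hG : paraD g d v i * e ∣ (Finset.Icc 1 i).attach.gcd fun x =>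
        Int.gcd (v x.1) (v (g + x.1)) / ∏ n ∈ (Finset.Ico x.1 i).attach, paraD g d v n.1 := by
      refine Finset.dvd_gcd fun x _ => ?_
      obtain ⟨hk, hki⟩ := Finset.mem_Icc.mp x.2
      rw [Finset.prod_attach]
      rw [Nat.dvd_div_iff_mul_dvd (prod_paraD_dvd g d v i x.1 hk)]
      have hDi_prod : paraD g d v i ∣ ∏ n ∈ Finset.Ico i j, paraD g d v n :=
        Finset.dvd_prod_of_mem _ (Finset.mem_Ico.mpr ⟨le_refl i, hij⟩)
      calc (∏ n ∈ Finset.Ico x.1 i, paraD g d v n) * (paraD g d v i * e)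
          ∣ (∏ n ∈ Finset.Ico x.1 i, paraD g d v n) *
            ((∏ n ∈ Finset.Ico i j, paraD g d v n) * e) :=
            mul_dvd_mul_left _ (mul_dvd_mul_right hDi_prod e)
        _ = (∏ n ∈ Finset.Ico x.1 j, paraD g d v n) * e := by
            rw [← mul_assoc, Finset.prod_Ico_consecutive _ hki hij.le]
        _ ∣ Int.gcd (v x.1) (v (g + x.1)) := by
            refine (Nat.dvd_div_iff_mul_dvd (prod_paraD_dvd g d v j x.1 hk)).mp ?_
            exact he2.trans (paraD_dvd_term g d v j x.1 hk (le_trans hki hij.le))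
    have hfin := Nat.dvd_gcd hdi hG
    rw [← paraD_def g d v i] at hfin
    exact (Nat.mul_dvd_mul_iff_left (hDpos i)).mp (by rw [mul_one]; exact hfin)
  exact Nat.dvd_one.mp (main _ (Nat.gcd_dvd_left _ _) (Nat.gcd_dvd_right _ _))
end

section
/- Given any positive integers D₁,…,D_{g-1} with D_i | d_i and gcd(d_i/D_i, D_j) = 1 for all i < j, there exists a primitive vector v ∈ ℤ^{2g} whose divisors are exactly D₁,…,D_{g-1}. In fact v = (D₁⋯D_{g-1}, D₂⋯D_{g-1}, …, D_{g-1}, 1, 0, …, 0) works. -/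
lemma finset_gcd_const {β : Type*} {s : Finset β} (hs : s.Nonempty) (a : ℕ) :
    s.gcd (fun _ => a) = a := by
  obtain ⟨x, hx⟩ := hs
  exact Nat.dvd_antisymm (Finset.gcd_dvd hx) (Finset.dvd_gcd fun _ _ => dvd_rfl)

/-- Any admissible set of divisors occurs: given `D_i ∣ d_i` with
`gcd(d_i/D_i, D_j) = 1` for `i < j`, the vector
`v = (D₁⋯D_{g-1}, D₂⋯D_{g-1}, …, D_{g-1}, 1, 0, …, 0)` is primitive and has
divisors exactly `D_i`. -/
theorem paraD_realisable (g : ℕ) (hg : 1 ≤ g) (d : ℕ → ℕ) (hd : ∀ n, 0 < d n)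
    (D : ℕ → ℕ) (hD0 : ∀ i, 0 < D i)
    (hDd : ∀ i, 1 ≤ i → i ≤ g - 1 → D i ∣ d i)
    (hcop : ∀ i j, 1 ≤ i → i < j → j ≤ g - 1 → Nat.gcd (d i / D i) (D j) = 1) :
    ∃ v : ℕ → ℤ,
      (v = fun j => if 1 ≤ j ∧ j ≤ g then ((∏ n ∈ Finset.Icc j (g - 1), D n : ℕ) : ℤ) else 0) ∧
      (Finset.Icc 1 (2 * g)).gcd (fun j => (v j).natAbs) = 1 ∧
      ∀ i, 1 ≤ i → i ≤ g - 1 → paraD g d v i = D i := by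
  set v : ℕ → ℤ :=
    fun j => if 1 ≤ j ∧ j ≤ g then ((∏ n ∈ Finset.Icc j (g - 1), D n : ℕ) : ℤ) else 0 with hv
  have hIcc : ∀ j : ℕ, Finset.Icc j (g - 1) = Finset.Ico j g := by
    intro j
    ext x
    simp only [Finset.mem_Icc, Finset.mem_Ico]
    omega
  refine ⟨v, hv, ?_, ?_⟩
  · -- primitivity
    have hmem : g ∈ Finset.Icc 1 (2 * g) := Finset.mem_Icc.mpr ⟨hg, by omega⟩
    have hvg : (v g).natAbs = 1 := by
      have he : Finset.Icc g (g - 1) = ∅ := by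
        apply Finset.Icc_eq_empty
        omega
      simp [hv, hg, he]
    have h := Finset.gcd_dvd (f := fun j => (v j).natAbs) hmem
    exact Nat.dvd_one.mp (by simpa only [hvg] using h)
  · intro i
    induction i using Nat.strong_induction_on with
    | _ i ih =>
      intro h1 h2
      rw [paraD]
      have hconst : ∀ j ∈ Finset.Icc 1 i,
          (Int.gcd (v j) (v (g + j)) / ∏ n ∈ (Finset.Ico j i).attach, paraD g d v n.1)
            = ∏ n ∈ Finset.Ico i g, D n := by
        intro j hj
        obtain ⟨hj1, hj2⟩ := Finset.mem_Icc.mp hj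
        have hvj : v j = ((∏ n ∈ Finset.Ico j g, D n : ℕ) : ℤ) := by
          have : 1 ≤ j ∧ j ≤ g := ⟨hj1, by omega⟩
          simp [hv, this, hIcc j]
        have hvgj : v (g + j) = 0 := by
          have : ¬ (1 ≤ g + j ∧ g + j ≤ g) := by omega
          simp only [hv]
          exact if_neg this
        have hprod : (∏ n ∈ (Finset.Ico j i).attach, paraD g d v n.1)
            = ∏ n ∈ Finset.Ico j i, D n := by
          rw [Finset.prod_attach (Finset.Ico j i) (fun n => paraD g d v n)]
          refine Finset.prod_congr rfl fun n hn => ?_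
          obtain ⟨hn1, hn2⟩ := Finset.mem_Ico.mp hn
          exact ih n hn2 (by omega) (by omega)
        rw [hvj, hvgj, hprod]
        have hgcd0 : Int.gcd ((∏ n ∈ Finset.Ico j g, D n : ℕ) : ℤ) 0
            = ∏ n ∈ Finset.Ico j g, D n := by
          rw [Int.gcd_zero_right, Int.natAbs_natCast]
        rw [hgcd0]
        have hsplit : (∏ n ∈ Finset.Ico j g, D n)
            = (∏ n ∈ Finset.Ico j i, D n) * ∏ n ∈ Finset.Ico i g, D n := by
          rw [← Finset.prod_union (Finset.Ico_disjoint_Ico_consecutive j i g),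
            Finset.Ico_union_Ico_eq_Ico hj2 (by omega)]
        rw [hsplit]
        exact Nat.mul_div_cancel_left _ (Finset.prod_pos fun n _ => hD0 n)
      have hconst' : ((Finset.Icc 1 i).attach.gcd fun j =>
          Int.gcd (v j.1) (v (g + j.1)) / ∏ n ∈ (Finset.Ico j.1 i).attach, paraD g d v n.1)
            = ∏ n ∈ Finset.Ico i g, D n := by
        rw [Finset.gcd_congr rfl (fun a _ => hconst a.1 a.2)]
        exact finset_gcd_const (Finset.attach_nonempty_iff.mpr ⟨1, Finset.mem_Icc.mpr ⟨le_refl 1, h1⟩⟩) _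
      rw [hconst']
      have hi : i < g := by omega
      rw [Finset.prod_eq_prod_Ico_succ_bot hi]
      have hdi : d i = D i * (d i / D i) := (Nat.mul_div_cancel' (hDd i h1 h2)).symm
      rw [hdi, Nat.gcd_mul_left]
      have hc : Nat.Coprime (d i / D i) (∏ n ∈ Finset.Ico (i + 1) g, D n) := by
        refine Nat.Coprime.prod_right fun n hn => ?_
        obtain ⟨hn1, hn2⟩ := Finset.mem_Ico.mp hn
        exact hcop i n h1 (by omega) (by omega)
      rw [hc, mul_one]
end

section
/- Let M = ((A,B),(C,D)) ∈ SL(2g,ℤ) satisfy MΛMᵀ = Λ, where Λ = ((0,Δ),(−Δ,0)) and Δ = diag(1, d₁, d₁d₂, …, d₁⋯d_{g-1}). Then each of the g×g blocks A, B, C, D satisfies the triangular divisibility condition: for j < i, the product d_j·d_{j+1}⋯d_{i-1} divides the (i,j) entry of the block. -/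
open Matrix

lemma aux_right_inl {g : ℕ} (D' : Fin g → ℤ) (N : Matrix (Fin g ⊕ Fin g) (Fin g ⊕ Fin g) ℤ)
    (u : Fin g ⊕ Fin g) (i : Fin g) :
    (N * fromBlocks 0 (-diagonal D') (diagonal D') 0) u (Sum.inl i)
      = N u (Sum.inr i) * D' i := by
  simp [Matrix.mul_apply, Fintype.sum_sum_type, Matrix.diagonal_apply, mul_ite,
    Finset.sum_ite_eq']

lemma aux_right_inr {g : ℕ} (D' : Fin g → ℤ) (N : Matrix (Fin g ⊕ Fin g) (Fin g ⊕ Fin g) ℤ)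
    (u : Fin g ⊕ Fin g) (i : Fin g) :
    (N * fromBlocks 0 (-diagonal D') (diagonal D') 0) u (Sum.inr i)
      = -(N u (Sum.inl i) * D' i) := by
  simp [Matrix.mul_apply, Fintype.sum_sum_type, Matrix.diagonal_apply, mul_ite,
    Finset.sum_ite_eq']

lemma aux_left_inl {g : ℕ} (D' : Fin g → ℤ) (N : Matrix (Fin g ⊕ Fin g) (Fin g ⊕ Fin g) ℤ)
    (j : Fin g) (w : Fin g ⊕ Fin g) :
    ((fromBlocks 0 (-diagonal D') (diagonal D') 0 : Matrix _ _ ℤ) * N) (Sum.inl j) w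
      = -(D' j * N (Sum.inr j) w) := by
  simp [Matrix.mul_apply, Fintype.sum_sum_type, Matrix.diagonal_apply, ite_mul,
    Finset.sum_ite_eq]

lemma aux_left_inr {g : ℕ} (D' : Fin g → ℤ) (N : Matrix (Fin g ⊕ Fin g) (Fin g ⊕ Fin g) ℤ)
    (j : Fin g) (w : Fin g ⊕ Fin g) :
    ((fromBlocks 0 (-diagonal D') (diagonal D') 0 : Matrix _ _ ℤ) * N) (Sum.inr j) w
      = D' j * N (Sum.inl j) w := by
  simp [Matrix.mul_apply, Fintype.sum_sum_type, Matrix.diagonal_apply, ite_mul,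
    Finset.sum_ite_eq]

/-- Each block `A, B, C, D` of a paramodular matrix `M = ((A,B),(C,D))`
satisfies the triangular divisibility condition: for `j < i`,
`d_{j+1}⋯d_i` divides the `(i,j)` entry (one-based `d_{j+1}⋯d_{i-1}` for
indices `i+1 > j+1`). -/
theorem paramodular_blocks_triangular (g : ℕ) (hg : 1 ≤ g) (d : ℕ → ℕ)
    (hd : ∀ n, 0 < d n)
    (Δ : Matrix (Fin g) (Fin g) ℤ)
    (hΔ : Δ = Matrix.diagonal fun i : Fin g => ((∏ n ∈ Finset.Icc 1 (i : ℕ), d n : ℕ) : ℤ))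
    (Λ : Matrix (Fin g ⊕ Fin g) (Fin g ⊕ Fin g) ℤ)
    (hΛ : Λ = Matrix.fromBlocks 0 Δ (-Δ) 0)
    (M : Matrix (Fin g ⊕ Fin g) (Fin g ⊕ Fin g) ℤ)
    (hdet : M.det = 1) (hM : M * Λ * Mᵀ = Λ) :
    ∀ i j : Fin g, (j : ℕ) < (i : ℕ) →
      (((∏ n ∈ Finset.Icc ((j : ℕ) + 1) (i : ℕ), d n : ℕ) : ℤ) ∣ M (Sum.inl i) (Sum.inl j)) ∧
      (((∏ n ∈ Finset.Icc ((j : ℕ) + 1) (i : ℕ), d n : ℕ) : ℤ) ∣ M (Sum.inl i) (Sum.inr j)) ∧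
      (((∏ n ∈ Finset.Icc ((j : ℕ) + 1) (i : ℕ), d n : ℕ) : ℤ) ∣ M (Sum.inr i) (Sum.inl j)) ∧
      (((∏ n ∈ Finset.Icc ((j : ℕ) + 1) (i : ℕ), d n : ℕ) : ℤ) ∣ M (Sum.inr i) (Sum.inr j)) := by
  -- the complementary divisors
  set D' : Fin g → ℤ := fun i => ((∏ n ∈ Finset.Ioc (i : ℕ) (g - 1), d n : ℕ) : ℤ) with hD'
  set Λ' : Matrix (Fin g ⊕ Fin g) (Fin g ⊕ Fin g) ℤ :=
    fromBlocks 0 (-diagonal D') (diagonal D') 0 with hΛ'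
  set Dt : ℤ := ((∏ n ∈ Finset.Ioc 0 (g - 1), d n : ℕ) : ℤ) with hDt
  have hDne : ∀ i : Fin g, D' i ≠ 0 := by
    intro i
    have : 0 < ∏ n ∈ Finset.Ioc (i : ℕ) (g - 1), d n :=
      Finset.prod_pos fun n _ => hd n
    simpa [hD'] using Int.natCast_ne_zero.mpr this.ne'
  have hle : ∀ i : Fin g, (i : ℕ) ≤ g - 1 := fun i => Nat.le_sub_one_of_lt i.isLt
  -- diagonal products
  have hΔΔ' : Δ * diagonal D' = Dt • 1 := by
    rw [hΔ, diagonal_mul_diagonal]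
    have : (fun i : Fin g =>
        ((∏ n ∈ Finset.Icc 1 (i : ℕ), d n : ℕ) : ℤ) * D' i) = fun _ => Dt := by
      funext i
      rw [hD', hDt]
      push_cast
      rw [show Finset.Icc 1 (i : ℕ) = Finset.Ioc 0 (i : ℕ) from rfl]
      rw [← Finset.prod_Ioc_consecutive (fun n => (d n : ℤ)) (Nat.zero_le _) (hle i)]
    rw [this]
    ext u v
    simp [Matrix.diagonal_apply, Matrix.smul_apply, Matrix.one_apply, mul_ite]
  have hΔ'Δ : diagonal D' * Δ = Dt • 1 := by
    rw [hΔ, diagonal_mul_diagonal]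
    rw [hΔ, diagonal_mul_diagonal] at hΔΔ'
    convert hΔΔ' using 2
    funext i; ring
  -- Λ * Λ' = Dt • 1 and Λ' * Λ = Dt • 1
  have hLL' : Λ * Λ' = Dt • 1 := by
    rw [hΛ, hΛ', fromBlocks_multiply]
    simp only [Matrix.zero_mul, Matrix.mul_zero, Matrix.mul_neg, zero_add, add_zero,
      Matrix.neg_mul, neg_neg, hΔΔ', zero_sub, neg_zero]
    rw [show (Dt • (1 : Matrix (Fin g ⊕ Fin g) (Fin g ⊕ Fin g) ℤ))
        = fromBlocks (Dt • 1) 0 0 (Dt • 1) by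
      rw [← fromBlocks_one, fromBlocks_smul, smul_zero]]
  have hL'L : Λ' * Λ = Dt • 1 := by
    rw [hΛ, hΛ', fromBlocks_multiply]
    simp only [Matrix.zero_mul, Matrix.mul_zero, Matrix.mul_neg, zero_add, add_zero,
      Matrix.neg_mul, neg_neg, hΔ'Δ, zero_sub, neg_zero]
    rw [show (Dt • (1 : Matrix (Fin g ⊕ Fin g) (Fin g ⊕ Fin g) ℤ))
        = fromBlocks (Dt • 1) 0 0 (Dt • 1) by
      rw [← fromBlocks_one, fromBlocks_smul, smul_zero]]
  -- invertibility of M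
  have hMd : IsUnit M.det := by rw [hdet]; exact isUnit_one
  have h1 : M * (Λ * Mᵀ * Λ') = Dt • 1 := by
    rw [show M * (Λ * Mᵀ * Λ') = M * Λ * Mᵀ * Λ' by
      simp only [Matrix.mul_assoc], hM, hLL']
  have h2 : Λ * Mᵀ * Λ' = Dt • M⁻¹ := by
    calc Λ * Mᵀ * Λ' = (M⁻¹ * M) * (Λ * Mᵀ * Λ') := by
          rw [Matrix.nonsing_inv_mul M hMd, Matrix.one_mul]
      _ = M⁻¹ * (M * (Λ * Mᵀ * Λ')) := by rw [Matrix.mul_assoc]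
      _ = M⁻¹ * (Dt • 1) := by rw [h1]
      _ = Dt • M⁻¹ := by rw [Matrix.mul_smul, Matrix.mul_one]
  have h3 : Dt • (Mᵀ * Λ') = Dt • (Λ' * M⁻¹) := by
    calc Dt • (Mᵀ * Λ') = (Dt • 1) * (Mᵀ * Λ') := by
          rw [Matrix.smul_mul, Matrix.one_mul]
      _ = (Λ' * Λ) * (Mᵀ * Λ') := by rw [hL'L]
      _ = Λ' * (Λ * Mᵀ * Λ') := by
          simp only [Matrix.mul_assoc]
      _ = Λ' * (Dt • M⁻¹) := by rw [h2]
      _ = Dt • (Λ' * M⁻¹) := by rw [Matrix.mul_smul]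
  have hDtne : Dt ≠ 0 := by
    have : 0 < ∏ n ∈ Finset.Ioc 0 (g - 1), d n := Finset.prod_pos fun n _ => hd n
    simpa [hDt] using Int.natCast_ne_zero.mpr this.ne'
  -- entrywise equality
  have key : ∀ u w, (Mᵀ * Λ') u w = (Λ' * M⁻¹) u w := by
    intro u w
    have := congrFun (congrFun h3 u) w
    simp only [Matrix.smul_apply, smul_eq_mul] at this
    exact mul_left_cancel₀ hDtne this
  -- main argument
  intro i j hij
  set p : ℤ := ((∏ n ∈ Finset.Icc ((j : ℕ) + 1) (i : ℕ), d n : ℕ) : ℤ) with hp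
  have hfact : D' j = p * D' i := by
    rw [hD', hp]
    push_cast
    rw [Finset.Icc_add_one_left_eq_Ioc]
    rw [Finset.prod_Ioc_consecutive (fun n => (d n : ℤ)) hij.le (hle i)]
  have hcancel : ∀ a b : ℤ, a * D' i = D' j * b → p ∣ a := by
    intro a b h
    rw [hfact] at h
    refine ⟨b, mul_left_cancel₀ (hDne i) ?_⟩
    linear_combination h
  refine ⟨?_, ?_, ?_, ?_⟩
  · -- u = inl j, w = inr i
    have h := key (Sum.inl j) (Sum.inr i)
    rw [hΛ', aux_right_inr D' Mᵀ (Sum.inl j) i, aux_left_inl D' M⁻¹ j (Sum.inr i)] at h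
    simp only [Matrix.transpose_apply] at h
    exact hcancel (M (Sum.inl i) (Sum.inl j)) (M⁻¹ (Sum.inr j) (Sum.inr i))
      (by linear_combination -h)
  · -- u = inr j, w = inr i
    have h := key (Sum.inr j) (Sum.inr i)
    rw [hΛ', aux_right_inr D' Mᵀ (Sum.inr j) i, aux_left_inr D' M⁻¹ j (Sum.inr i)] at h
    simp only [Matrix.transpose_apply] at h
    exact hcancel (M (Sum.inl i) (Sum.inr j)) (-(M⁻¹ (Sum.inl j) (Sum.inr i)))
      (by linear_combination -h)
  · -- u = inl j, w = inl i
    have h := key (Sum.inl j) (Sum.inl i)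
    rw [hΛ', aux_right_inl D' Mᵀ (Sum.inl j) i, aux_left_inl D' M⁻¹ j (Sum.inl i)] at h
    simp only [Matrix.transpose_apply] at h
    exact hcancel (M (Sum.inr i) (Sum.inl j)) (-(M⁻¹ (Sum.inr j) (Sum.inl i)))
      (by linear_combination h)
  · -- u = inr j, w = inl i
    have h := key (Sum.inr j) (Sum.inl i)
    rw [hΛ', aux_right_inl D' Mᵀ (Sum.inr j) i, aux_left_inr D' M⁻¹ j (Sum.inl i)] at h
    simp only [Matrix.transpose_apply] at h
    exact hcancel (M (Sum.inr i) (Sum.inr j)) (M⁻¹ (Sum.inl j) (Sum.inl i))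
      (by linear_combination h)
end

section
/- Let Γ̃_pol^lev = { M ∈ Γ̃_pol : M acts as the identity on Λ^∨/Λ }, where Λ = ℤ^{2g} with the paramodular form and Λ^∨ its dual lattice. Then M ∈ Γ̃_pol lies in Γ̃_pol^lev if and only if for every i = 1,…,g, the number d₁⋯d_{i-1} divides every entry of the i-th row and of the (g+i)-th row of M − 𝟙. -/
open Matrix

/-- A paramodular matrix `M` induces the identity on `L^∨/L` if and only if
`d₁⋯d_{i-1}` divides every entry of the `i`-th and `(g+i)`-th rows of
`M − 𝟙`. -/
theorem level_structure_characterisation (g : ℕ) (hg : 1 ≤ g) (d : ℕ → ℕ)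
    (hd : ∀ n, 0 < d n)
    (Δ : Matrix (Fin g) (Fin g) ℤ)
    (hΔ : Δ = Matrix.diagonal fun i : Fin g => ((∏ n ∈ Finset.Icc 1 (i : ℕ), d n : ℕ) : ℤ))
    (Λ : Matrix (Fin g ⊕ Fin g) (Fin g ⊕ Fin g) ℤ)
    (hΛ : Λ = Matrix.fromBlocks 0 Δ (-Δ) 0)
    (M : Matrix (Fin g ⊕ Fin g) (Fin g ⊕ Fin g) ℤ)
    (hdet : M.det = 1) (hM : M * Λ * Mᵀ = Λ) :
    (∀ y : (Fin g ⊕ Fin g) → ℚ,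
        (∀ l : (Fin g ⊕ Fin g) → ℤ,
          ∃ z : ℤ, (fun a => ((l a : ℚ))) ⬝ᵥ (Λ.map (Int.cast : ℤ → ℚ)).mulVec y = (z : ℚ)) →
        ∀ a : Fin g ⊕ Fin g,
          ∃ z : ℤ, Matrix.vecMul y (M.map (Int.cast : ℤ → ℚ)) a - y a = (z : ℚ)) ↔
    (∀ i : Fin g, ∀ b : Fin g ⊕ Fin g,
        (((∏ n ∈ Finset.Icc 1 (i : ℕ), d n : ℕ) : ℤ) ∣ (M - 1) (Sum.inl i) b) ∧
        (((∏ n ∈ Finset.Icc 1 (i : ℕ), d n : ℕ) : ℤ) ∣ (M - 1) (Sum.inr i) b)) := by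
  subst hΔ hΛ
  set P : Fin g → ℤ := fun i => ((∏ n ∈ Finset.Icc 1 (i : ℕ), d n : ℕ) : ℤ) with hP
  have hP0 : ∀ i, ((P i : ℚ)) ≠ 0 := by
    intro i
    have : 0 < ∏ n ∈ Finset.Icc 1 (i : ℕ), d n := Finset.prod_pos fun n _ => hd n
    simp only [hP]
    exact_mod_cast this.ne'
  set Lam : Matrix (Fin g ⊕ Fin g) (Fin g ⊕ Fin g) ℤ :=
    Matrix.fromBlocks 0 (Matrix.diagonal P) (-(Matrix.diagonal P)) 0 with hLam
  have hmv : ∀ (y : (Fin g ⊕ Fin g) → ℚ) (a : Fin g ⊕ Fin g),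
      ((Lam.map (Int.cast : ℤ → ℚ)) *ᵥ y) a =
        Sum.elim (fun j => (P j : ℚ) * y (Sum.inr j))
          (fun j => -((P j : ℚ) * y (Sum.inl j))) a := by
    intro y a
    cases a with
    | inl j =>
      simp [hLam, Matrix.mulVec, dotProduct, Fintype.sum_sum_type,
        Matrix.diagonal_apply, ite_mul, Finset.sum_ite_eq]
    | inr j =>
      simp [hLam, Matrix.mulVec, dotProduct, Fintype.sum_sum_type,
        Matrix.diagonal_apply, ite_mul, Finset.sum_ite_eq]
  constructor
  · intro H i b
    constructor
    · have hdual : ∀ l : (Fin g ⊕ Fin g) → ℤ,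
          ∃ z : ℤ, (fun a => ((l a : ℚ))) ⬝ᵥ
            ((Lam.map (Int.cast : ℤ → ℚ)) *ᵥ Pi.single (Sum.inl i) ((P i : ℚ))⁻¹) = (z : ℚ) := by
        intro l
        refine ⟨-(l (Sum.inr i)), ?_⟩
        have hv : (Lam.map (Int.cast : ℤ → ℚ)) *ᵥ Pi.single (Sum.inl i) ((P i : ℚ))⁻¹ =
            fun a => (((Pi.single (Sum.inr i) (-1 : ℤ) : (Fin g ⊕ Fin g) → ℤ) a : ℤ) : ℚ) := by
          funext a
          rw [hmv]
          cases a with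
          | inl j => simp [Pi.single_apply]
          | inr j =>
            rcases eq_or_ne j i with rfl | hji
            · simp [Pi.single_apply, hP0 j]
            · simp [Pi.single_apply, hji]
        rw [hv]
        simp [dotProduct, Pi.single_apply, mul_ite, Finset.sum_ite_eq']
      obtain ⟨z, hz⟩ := H (Pi.single (Sum.inl i) ((P i : ℚ))⁻¹) hdual b
      refine ⟨z, ?_⟩
      have h1 : ((P i : ℚ))⁻¹ * ((M (Sum.inl i) b : ℚ) - (if Sum.inl i = b then 1 else 0)) = z := by
        rw [← hz, Matrix.single_vecMul]
        simp only [Matrix.map_apply, Pi.single_apply, mul_sub, mul_ite, mul_one, mul_zero]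
        congr 1
        by_cases hb : b = Sum.inl i <;> simp [hb, eq_comm]
      have h2 : ((M (Sum.inl i) b : ℚ) - (if Sum.inl i = b then 1 else 0)) = (P i : ℚ) * z :=
        (inv_mul_eq_iff_eq_mul₀ (hP0 i)).1 h1
      have h3 : (M - 1) (Sum.inl i) b = P i * z := by
        have : (((M - 1) (Sum.inl i) b : ℤ) : ℚ) = ((P i * z : ℤ) : ℚ) := by
          rw [Matrix.sub_apply, Matrix.one_apply]
          push_cast [apply_ite (Int.cast : ℤ → ℚ)]
          exact h2
        exact_mod_cast this
      exact h3
    · have hdual : ∀ l : (Fin g ⊕ Fin g) → ℤ,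
          ∃ z : ℤ, (fun a => ((l a : ℚ))) ⬝ᵥ
            ((Lam.map (Int.cast : ℤ → ℚ)) *ᵥ Pi.single (Sum.inr i) ((P i : ℚ))⁻¹) = (z : ℚ) := by
        intro l
        refine ⟨l (Sum.inl i), ?_⟩
        have hv : (Lam.map (Int.cast : ℤ → ℚ)) *ᵥ Pi.single (Sum.inr i) ((P i : ℚ))⁻¹ =
            fun a => (((Pi.single (Sum.inl i) (1 : ℤ) : (Fin g ⊕ Fin g) → ℤ) a : ℤ) : ℚ) := by
          funext a
          rw [hmv]
          cases a with
          | inr j => simp [Pi.single_apply]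
          | inl j =>
            rcases eq_or_ne j i with rfl | hji
            · simp [Pi.single_apply, hP0 j]
            · simp [Pi.single_apply, hji]
        rw [hv]
        simp [dotProduct, Pi.single_apply, mul_ite, Finset.sum_ite_eq']
      obtain ⟨z, hz⟩ := H (Pi.single (Sum.inr i) ((P i : ℚ))⁻¹) hdual b
      refine ⟨z, ?_⟩
      have h1 : ((P i : ℚ))⁻¹ * ((M (Sum.inr i) b : ℚ) - (if Sum.inr i = b then 1 else 0)) = z := by
        rw [← hz, Matrix.single_vecMul]
        simp only [Matrix.map_apply, Pi.single_apply, mul_sub, mul_ite, mul_one, mul_zero]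
        congr 1
        by_cases hb : b = Sum.inr i <;> simp [hb, eq_comm]
      have h2 : ((M (Sum.inr i) b : ℚ) - (if Sum.inr i = b then 1 else 0)) = (P i : ℚ) * z :=
        (inv_mul_eq_iff_eq_mul₀ (hP0 i)).1 h1
      have h3 : (M - 1) (Sum.inr i) b = P i * z := by
        have : (((M - 1) (Sum.inr i) b : ℤ) : ℚ) = ((P i * z : ℤ) : ℚ) := by
          rw [Matrix.sub_apply, Matrix.one_apply]
          push_cast [apply_ite (Int.cast : ℤ → ℚ)]
          exact h2
        exact_mod_cast this
      exact h3
  · intro hdiv y hy a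
    have h1 : ∀ j : Fin g, ∃ m : ℤ, (P j : ℚ) * y (Sum.inl j) = m := by
      intro j
      obtain ⟨z, hz⟩ := hy (Pi.single (Sum.inr j) 1)
      refine ⟨-z, ?_⟩
      have hl : (fun a => (((Pi.single (Sum.inr j) 1 : (Fin g ⊕ Fin g) → ℤ) a : ℤ) : ℚ)) =
          (Pi.single (Sum.inr j) (1 : ℚ)) := by
        funext a; simp [Pi.single_apply, apply_ite (Int.cast : ℤ → ℚ)]
      rw [hl, single_dotProduct, one_mul, hmv] at hz
      simp only [Sum.elim_inr] at hz
      push_cast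
      linarith [hz]
    have h2 : ∀ j : Fin g, ∃ m : ℤ, (P j : ℚ) * y (Sum.inr j) = m := by
      intro j
      obtain ⟨z, hz⟩ := hy (Pi.single (Sum.inl j) 1)
      refine ⟨z, ?_⟩
      have hl : (fun a => (((Pi.single (Sum.inl j) 1 : (Fin g ⊕ Fin g) → ℤ) a : ℤ) : ℚ)) =
          (Pi.single (Sum.inl j) (1 : ℚ)) := by
        funext a; simp [Pi.single_apply, apply_ite (Int.cast : ℤ → ℚ)]
      rw [hl, single_dotProduct, one_mul, hmv] at hz
      simpa using hz
    choose m1 hm1 using h1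
    choose m2 hm2 using h2
    choose k1 hk1 using fun j => (hdiv j a).1
    choose k2 hk2 using fun j => (hdiv j a).2
    refine ⟨∑ j, m1 j * k1 j + ∑ j, m2 j * k2 j, ?_⟩
    have key1 : ∀ j : Fin g, y (Sum.inl j) *
        (((M (Sum.inl j) a : ℤ) : ℚ) - (if Sum.inl j = a then 1 else 0)) =
        ((m1 j * k1 j : ℤ) : ℚ) := by
      intro j
      have e : ((M (Sum.inl j) a : ℤ) : ℚ) - (if Sum.inl j = a then 1 else 0) =
          (P j : ℚ) * (k1 j : ℚ) := by
        have h := hk1 j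
        rw [Matrix.sub_apply, Matrix.one_apply] at h
        have h' := congrArg (Int.cast : ℤ → ℚ) h
        push_cast [apply_ite (Int.cast : ℤ → ℚ)] at h'
        simp only [hP]
        push_cast
        exact h'
      rw [e]
      push_cast
      rw [show y (Sum.inl j) * ((P j : ℚ) * (k1 j : ℚ)) =
        ((P j : ℚ) * y (Sum.inl j)) * (k1 j : ℚ) by ring, hm1 j]
    have key2 : ∀ j : Fin g, y (Sum.inr j) *
        (((M (Sum.inr j) a : ℤ) : ℚ) - (if Sum.inr j = a then 1 else 0)) =
        ((m2 j * k2 j : ℤ) : ℚ) := by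
      intro j
      have e : ((M (Sum.inr j) a : ℤ) : ℚ) - (if Sum.inr j = a then 1 else 0) =
          (P j : ℚ) * (k2 j : ℚ) := by
        have h := hk2 j
        rw [Matrix.sub_apply, Matrix.one_apply] at h
        have h' := congrArg (Int.cast : ℤ → ℚ) h
        push_cast [apply_ite (Int.cast : ℤ → ℚ)] at h'
        simp only [hP]
        push_cast
        exact h'
      rw [e]
      push_cast
      rw [show y (Sum.inr j) * ((P j : ℚ) * (k2 j : ℚ)) =
        ((P j : ℚ) * y (Sum.inr j)) * (k2 j : ℚ) by ring, hm2 j]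
    have hsum : ∑ w : Fin g ⊕ Fin g, y w * (if w = a then (1 : ℚ) else 0) = y a := by
      simp [mul_ite]
    have hstep : Matrix.vecMul y (M.map (Int.cast : ℤ → ℚ)) a - y a =
        ∑ w : Fin g ⊕ Fin g, y w * (((M w a : ℤ) : ℚ) - (if w = a then 1 else 0)) := by
      simp only [mul_sub, Finset.sum_sub_distrib, hsum, Matrix.vecMul, dotProduct,
        Matrix.map_apply]
    rw [hstep, Fintype.sum_sum_type]
    simp only [key1, key2]
    push_cast
    ring
end

section
/- Every matrix in the conjugated paramodular group with level structure has integer entries: Γ_pol^lev := R⁻¹ Γ̃_pol^lev R ⊆ Sp(2g,ℤ), where R = ((𝟙,0),(0,Δ)). -/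
open Matrix

/-- The conjugated paramodular group with canonical level structure is
contained in `Sp(2g,ℤ)`: for `M ∈ Γ̃_pol^lev`, the matrix `R⁻¹MR` with
`R = ((𝟙,0),(0,Δ))` has integer entries and is symplectic. -/
theorem level_structure_subset_Sp (g : ℕ) (hg : 1 ≤ g) (d : ℕ → ℕ)
    (hd : ∀ n, 0 < d n)
    (e : Fin g → ℕ) (he : e = fun i : Fin g => ∏ n ∈ Finset.Icc 1 (i : ℕ), d n)
    (Δ : Matrix (Fin g) (Fin g) ℤ)
    (hΔ : Δ = Matrix.diagonal fun i : Fin g => ((e i : ℕ) : ℤ))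
    (Λ : Matrix (Fin g ⊕ Fin g) (Fin g ⊕ Fin g) ℤ)
    (hΛ : Λ = Matrix.fromBlocks 0 Δ (-Δ) 0)
    (M : Matrix (Fin g ⊕ Fin g) (Fin g ⊕ Fin g) ℤ)
    (hdet : M.det = 1) (hM : M * Λ * Mᵀ = Λ)
    (hlev : ∀ i : Fin g, ∀ b : Fin g ⊕ Fin g,
        (((e i : ℕ) : ℤ) ∣ (M - 1) (Sum.inl i) b) ∧
        (((e i : ℕ) : ℤ) ∣ (M - 1) (Sum.inr i) b))
    (R Rinv : Matrix (Fin g ⊕ Fin g) (Fin g ⊕ Fin g) ℚ)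
    (hR : R = Matrix.fromBlocks 1 0 0 (Matrix.diagonal fun i : Fin g => ((e i : ℚ))))
    (hRinv : Rinv = Matrix.fromBlocks 1 0 0 (Matrix.diagonal fun i : Fin g => ((e i : ℚ))⁻¹))
    (N : Matrix (Fin g ⊕ Fin g) (Fin g ⊕ Fin g) ℚ)
    (hN : N = Rinv * M.map (Int.cast : ℤ → ℚ) * R) :
    (∀ a b : Fin g ⊕ Fin g, ∃ z : ℤ, N a b = (z : ℚ)) ∧
      N * Matrix.fromBlocks 0 1 (-1) 0 * Nᵀ = Matrix.fromBlocks 0 1 (-1) 0 := by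
  have hepos : ∀ i : Fin g, 0 < e i := by
    intro i; rw [he]; exact Finset.prod_pos fun n _ => hd n
  have heQ : ∀ i : Fin g, ((e i : ℚ)) ≠ 0 := fun i =>
    Nat.cast_ne_zero.mpr (hepos i).ne'
  set u : Fin g ⊕ Fin g → ℚ := Sum.elim (fun _ => 1) (fun i => ((e i : ℚ))⁻¹) with hu
  set v : Fin g ⊕ Fin g → ℚ := Sum.elim (fun _ => 1) (fun i => ((e i : ℚ))) with hv
  have hRd : R = Matrix.diagonal v := by
    rw [hR, hv, ← Matrix.diagonal_one, Matrix.fromBlocks_diagonal]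
  have hRinvd : Rinv = Matrix.diagonal u := by
    rw [hRinv, hu, ← Matrix.diagonal_one, Matrix.fromBlocks_diagonal]
  have hNentry : ∀ a b, N a b = u a * ((M a b : ℤ) : ℚ) * v b := by
    intro a b
    rw [hN, hRd, hRinvd, Matrix.mul_diagonal, Matrix.diagonal_mul, Matrix.map_apply]
  constructor
  · rintro (i | i) (j | j)
    · exact ⟨M (Sum.inl i) (Sum.inl j), by rw [hNentry]; simp [hu, hv]⟩
    · refine ⟨M (Sum.inl i) (Sum.inr j) * (e j : ℤ), ?_⟩
      rw [hNentry]; simp [hu, hv]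
    · obtain ⟨z, hz⟩ := (hlev i (Sum.inl j)).2
      have h1 : M (Sum.inr i) (Sum.inl j) = ((e i : ℕ) : ℤ) * z := by
        have h0 : (M - 1) (Sum.inr i) (Sum.inl j) = M (Sum.inr i) (Sum.inl j) := by
          simp [Matrix.sub_apply, Matrix.one_apply]
        rw [← h0, hz]
      refine ⟨z, ?_⟩
      rw [hNentry, h1]
      simp only [hu, hv, Sum.elim_inr, Sum.elim_inl, mul_one]
      push_cast
      rw [inv_mul_cancel_left₀ (heQ i)]
    · have hdvd : ((e i : ℕ) : ℤ) ∣ M (Sum.inr i) (Sum.inr j) * (e j : ℤ) := by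
        by_cases hij : i = j
        · subst hij; exact dvd_mul_left _ _
        · refine Dvd.dvd.mul_right ?_ _
          have h0 : (M - 1) (Sum.inr i) (Sum.inr j) = M (Sum.inr i) (Sum.inr j) := by
            simp [Matrix.sub_apply, Matrix.one_apply, hij]
          rw [← h0]; exact (hlev i (Sum.inr j)).2
      obtain ⟨z, hz⟩ := hdvd
      refine ⟨z, ?_⟩
      rw [hNentry]
      simp only [hu, hv, Sum.elim_inr]
      have hzQ : ((M (Sum.inr i) (Sum.inr j) : ℤ) : ℚ) * ((e j : ℕ) : ℚ) =
          ((e i : ℕ) : ℚ) * (z : ℚ) := by exact_mod_cast congrArg (Int.cast : ℤ → ℚ) hz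
      rw [mul_assoc, hzQ, inv_mul_cancel_left₀ (heQ i)]
  · set M' := M.map (Int.cast : ℤ → ℚ) with hM'def
    have hRT : Rᵀ = R := by
      rw [hR]; simp [Matrix.fromBlocks_transpose, Matrix.diagonal_transpose]
    have hRinvT : Rinvᵀ = Rinv := by
      rw [hRinv]; simp [Matrix.fromBlocks_transpose, Matrix.diagonal_transpose]
    have hvu : (fun a => v a * u a) = fun _ => (1 : ℚ) := by
      funext a; rcases a with i | i <;> simp [hu, hv, mul_inv_cancel₀ (heQ i)]
    have huv : (fun a => u a * v a) = fun _ => (1 : ℚ) := by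
      funext a; rcases a with i | i <;> simp [hu, hv, inv_mul_cancel₀ (heQ i)]
    have hRR : R * Rinv = 1 := by
      rw [hRd, hRinvd, Matrix.diagonal_mul_diagonal]
      rw [show (fun i => v i * u i) = fun _ => (1:ℚ) from hvu]
      exact Matrix.diagonal_one
    have hRinvR : Rinv * R = 1 := by
      rw [hRd, hRinvd, Matrix.diagonal_mul_diagonal]
      rw [show (fun i => u i * v i) = fun _ => (1:ℚ) from huv]
      exact Matrix.diagonal_one
    have hΛQ : Λ.map (Int.cast : ℤ → ℚ) =
        Matrix.fromBlocks 0 (Matrix.diagonal fun i : Fin g => ((e i : ℚ)))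
          (-(Matrix.diagonal fun i : Fin g => ((e i : ℚ)))) 0 := by
      rw [hΛ, hΔ]
      ext (a | a) (b | b) <;>
        simp [Matrix.map_apply, Matrix.diagonal_apply, apply_ite (Int.cast : ℤ → ℚ)]
    have hΛR : Λ.map (Int.cast : ℤ → ℚ) =
        R * Matrix.fromBlocks 0 1 (-1) 0 * Rᵀ := by
      rw [hΛQ, hRT, hR, Matrix.fromBlocks_multiply, Matrix.fromBlocks_multiply]
      simp
    have hMQ : M' * Λ.map (Int.cast : ℤ → ℚ) * M'ᵀ = Λ.map (Int.cast : ℤ → ℚ) := by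
      have h := congrArg ((Int.castRingHom ℚ).mapMatrix) hM
      rw [_root_.map_mul, _root_.map_mul] at h
      simpa only [RingHom.mapMatrix_apply, Int.coe_castRingHom,
        Matrix.transpose_map] using h
    have key : N * Matrix.fromBlocks (0 : Matrix (Fin g) (Fin g) ℚ) 1 (-1) 0 * Nᵀ =
        Rinv * (M' * Λ.map (Int.cast : ℤ → ℚ) * M'ᵀ) * Rinv := by
      rw [hN, hΛR, Matrix.transpose_mul, Matrix.transpose_mul, hRT, hRinvT]
      simp only [mul_assoc]
    rw [key, hMQ, hΛR, hRT]
    calc Rinv * (R * Matrix.fromBlocks 0 1 (-1) 0 * R) * Rinv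
        = Rinv * R * (Matrix.fromBlocks 0 1 (-1) 0 * (R * Rinv)) := by
          simp only [mul_assoc]
      _ = Matrix.fromBlocks 0 1 (-1) 0 := by rw [hRinvR, hRR, one_mul, mul_one]
end

section
/- For a primitive vector v ∈ ℤ^{2g}, define v̂_i := gcd(gcd(v₁,v_{g+1}), …, gcd(v_i,v_{g+i}), d_i·gcd(v_{i+1},v_{g+i+1}), …, (d_i⋯d_{g-1})·gcd(v_g,v_{2g})). Then: (1) v̂₁ = ∏_{i=1}^{g-1} D_i(v) and v̂_g = 1; (2) v̂_i divides d_i·v̂_{i+1} for i = 1,…,g−1; (3) v̂_i divides v̂_{i-1} for i = 2,…,g; (4) v̂_i = gcd(v̂_{i-1}, gcd(v_i, v_{g+i}), d_i·v̂_{i+1}) for i = 2,…,g−1. -/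
/-- `v̂_i = gcd(gcd(v₁,v_{g+1}), …, gcd(v_i,v_{g+i}),
d_i·gcd(v_{i+1},v_{g+i+1}), …, (d_i⋯d_{g-1})·gcd(v_g,v_{2g}))`. -/
def vhat (g : ℕ) (d : ℕ → ℕ) (v : ℕ → ℤ) (i : ℕ) : ℕ :=
  (Finset.Icc 1 g).gcd fun j =>
    if j ≤ i then Int.gcd (v j) (v (g + j))
    else (∏ n ∈ Finset.Icc i (j - 1), d n) * Int.gcd (v j) (v (g + j))

namespace VhatAux

/-- gcd over an attached finset. -/
lemma gcd_attach (s : Finset ℕ) (F : ℕ → ℕ) :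
    s.attach.gcd (fun j => F j.1) = s.gcd F := by
  classical
  have h := Finset.gcd_image (f := F) (g := Subtype.val) s.attach
  rw [Finset.attach_image_val] at h
  exact h.symm

variable (g : ℕ) (d : ℕ → ℕ) (v : ℕ → ℤ)

/-- `G j = gcd(v_j, v_{g+j})`. -/
def G (j : ℕ) : ℕ := Int.gcd (v j) (v (g + j))

/-- `Q j i = D_j ⋯ D_{i-1}`. -/
def Q (j i : ℕ) : ℕ := ∏ n ∈ Finset.Ico j i, paraD g d v n

lemma paraD_eq (i : ℕ) : paraD g d v i =
    Nat.gcd (d i) ((Finset.Icc 1 i).gcd fun j => G g v j / Q g d v j i) := by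
  rw [paraD]
  congr 1
  rw [← gcd_attach (Finset.Icc 1 i)]
  refine Finset.gcd_congr rfl fun j _ => ?_
  rw [G, Q, ← Finset.prod_attach (Finset.Ico j.1 i) (fun n => paraD g d v n)]

lemma paraD_pos {i : ℕ} (hdi : 0 < d i) : 0 < paraD g d v i := by
  rw [paraD_eq]; exact Nat.gcd_pos_of_pos_left _ hdi

lemma paraD_dvd_d (i : ℕ) : paraD g d v i ∣ d i := by
  rw [paraD_eq]; exact Nat.gcd_dvd_left _ _

lemma paraD_dvd_div {i j : ℕ} (h1 : 1 ≤ j) (h2 : j ≤ i) :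
    paraD g d v i ∣ G g v j / Q g d v j i := by
  rw [paraD_eq]
  exact (Nat.gcd_dvd_right _ _).trans (Finset.gcd_dvd (Finset.mem_Icc.mpr ⟨h1, h2⟩))

lemma Q_succ {i j : ℕ} (h : j ≤ i) :
    Q g d v j (i + 1) = Q g d v j i * paraD g d v i :=
  Finset.prod_Ico_succ_top h _

lemma Q_dvd : ∀ i j, 1 ≤ j → j ≤ i → Q g d v j i ∣ G g v j := by
  intro i
  induction i with
  | zero => intro j h1 h2; omega
  | succ i ih =>
    intro j h1 h2
    rcases eq_or_lt_of_le h2 with rfl | hlt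
    · simp [Q]
    · have hji : j ≤ i := by omega
      rw [Q_succ g d v hji]
      exact (Nat.dvd_div_iff_mul_dvd (ih j h1 hji)).mp (paraD_dvd_div g d v h1 hji)

lemma div_step {i j : ℕ} (h1 : 1 ≤ j) (h2 : j ≤ i) :
    G g v j / Q g d v j i = paraD g d v i * (G g v j / Q g d v j (i + 1)) := by
  rw [Q_succ g d v h2, ← Nat.div_div_eq_div_mul]
  exact (Nat.mul_div_cancel' (paraD_dvd_div g d v h1 h2)).symm

/-- The interpolating quantity `A_i`. -/
def A (i : ℕ) : ℕ := (Finset.Icc 1 g).gcd fun j =>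
  if j ≤ i then G g v j / Q g d v j i
  else (∏ n ∈ Finset.Icc i (j - 1), d n) * G g v j

/-- The terms of `vhat`. -/
def T (i j : ℕ) : ℕ :=
  if j ≤ i then Int.gcd (v j) (v (g + j))
  else (∏ n ∈ Finset.Icc i (j - 1), d n) * Int.gcd (v j) (v (g + j))

lemma vhat_eq (i : ℕ) : vhat g d v i = (Finset.Icc 1 g).gcd (T g d v i) := rfl

lemma Icc_sub_one {i j : ℕ} (h : 1 ≤ j) :
    Finset.Icc i (j - 1) = Finset.Ico i j := by
  rw [← Finset.Ico_add_one_right_eq_Icc]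
  congr 1
  omega

lemma prod_d_split {i j : ℕ} (h : i < j) :
    (∏ n ∈ Finset.Icc i (j - 1), d n)
      = d i * ∏ n ∈ Finset.Icc (i + 1) (j - 1), d n := by
  rw [Icc_sub_one (i := i) (by omega), Icc_sub_one (i := i + 1) (by omega),
    Finset.prod_eq_prod_Ico_succ_bot h]

lemma T_split {i j : ℕ} (h : i < j) :
    T g d v i j = d i * T g d v (i + 1) j := by
  simp only [T]
  rw [if_neg (by omega), prod_d_split d h]
  by_cases hj : j ≤ i + 1
  · rw [if_pos hj]
    have he : Finset.Icc (i + 1) (j - 1) = ∅ := Finset.Icc_eq_empty (by omega)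
    rw [he, Finset.prod_empty, mul_one]
  · rw [if_neg hj, mul_assoc]

lemma vhat_dvd_T {i j : ℕ} (hj : j ∈ Finset.Icc 1 g) :
    vhat g d v i ∣ T g d v i j := by
  rw [vhat_eq]
  exact Finset.gcd_dvd hj

lemma vhat_dvd_G {i j : ℕ} (h1 : 1 ≤ j) (h2 : j ≤ g) (h3 : j ≤ i) :
    vhat g d v i ∣ G g v j := by
  have := vhat_dvd_T g d v (i := i) (Finset.mem_Icc.mpr ⟨h1, h2⟩)
  rwa [T, if_pos h3] at this

lemma nat_gcd_mul (s : Finset ℕ) (f : ℕ → ℕ) (a : ℕ) :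
    (s.gcd fun x => a * f x) = a * s.gcd f := by
  rw [Finset.gcd_mul_left, normalize_eq]

lemma Icc_union_Ioc {a b c : ℕ} (h1 : a ≤ b) (h2 : b ≤ c) :
    Finset.Icc a b ∪ Finset.Ioc b c = Finset.Icc a c := by
  ext x
  simp only [Finset.mem_union, Finset.mem_Icc, Finset.mem_Ioc]
  omega


lemma vhat_top (hg : 1 ≤ g)
    (hv : (Finset.Icc 1 (2 * g)).gcd (fun j => (v j).natAbs) = 1) :
    vhat g d v g = 1 := by
  rw [← Nat.dvd_one, ← hv]
  refine Finset.dvd_gcd fun j hj => ?_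
  rw [Finset.mem_Icc] at hj
  by_cases hle : j ≤ g
  · exact (vhat_dvd_G g d v hj.1 hle hle).trans (Nat.gcd_dvd_left _ _)
  · have h1 : 1 ≤ j - g := by omega
    have h2 : j - g ≤ g := by omega
    have h3 := (vhat_dvd_G g d v (i := g) h1 h2 h2).trans
      (Nat.gcd_dvd_right (v (j - g)).natAbs (v (g + (j - g))).natAbs)
    rwa [show g + (j - g) = j by omega] at h3

lemma A_one : A g d v 1 = vhat g d v 1 := by
  rw [A, vhat]
  refine Finset.gcd_congr rfl fun j hj => ?_
  by_cases h : j ≤ 1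
  · rw [if_pos h, if_pos h]
    have hj1 : j = 1 := by rw [Finset.mem_Icc] at hj; omega
    subst hj1
    rw [Q]
    simp [G]
  · rw [if_neg h, if_neg h, G]

lemma A_top (hg : 1 ≤ g)
    (hv : (Finset.Icc 1 (2 * g)).gcd (fun j => (v j).natAbs) = 1) :
    A g d v g = 1 := by
  rw [← Nat.dvd_one, ← vhat_top g d v hg hv, vhat_eq]
  refine Finset.dvd_gcd fun j hj => ?_
  rw [Finset.mem_Icc] at hj
  rw [T, if_pos hj.2]
  have h1 : A g d v g ∣ G g v j / Q g d v j g := by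
    rw [A]
    have h := Finset.gcd_dvd (s := Finset.Icc 1 g)
      (f := fun j => if j ≤ g then G g v j / Q g d v j g
        else (∏ n ∈ Finset.Icc g (j - 1), d n) * G g v j)
      (Finset.mem_Icc.mpr hj)
    simpa only [hj.2, if_true] using h
  exact h1.trans (Nat.div_dvd_of_dvd (Q_dvd g d v g j hj.1 hj.2))

lemma split_gcd (i : ℕ) (h1 : 1 ≤ i) (h2 : i ≤ g) (f : ℕ → ℕ) :
    (Finset.Icc 1 g).gcd f = Nat.gcd ((Finset.Icc 1 i).gcd f) ((Finset.Ioc i g).gcd f) := by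
  rw [← Icc_union_Ioc h1 h2, Finset.gcd_union]
  rfl

lemma A_step (hd : ∀ n, 0 < d n) {i : ℕ} (h1 : 1 ≤ i) (h2 : i < g) :
    A g d v i = paraD g d v i * A g d v (i + 1) := by
  set X := (Finset.Icc 1 i).gcd (fun j => G g v j / Q g d v j (i + 1)) with hX
  set Y := (Finset.Ioc i g).gcd (fun j =>
      if j ≤ i + 1 then G g v j / Q g d v j (i + 1)
      else (∏ n ∈ Finset.Icc (i + 1) (j - 1), d n) * G g v j) with hY
  have hL : (Finset.Icc 1 i).gcd (fun j =>
      if j ≤ i then G g v j / Q g d v j i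
      else (∏ n ∈ Finset.Icc i (j - 1), d n) * G g v j) = paraD g d v i * X := by
    rw [hX, ← nat_gcd_mul]
    refine Finset.gcd_congr rfl fun j hj => ?_
    rw [Finset.mem_Icc] at hj
    rw [if_pos hj.2]
    exact div_step g d v hj.1 hj.2
  have hR : (Finset.Ioc i g).gcd (fun j =>
      if j ≤ i then G g v j / Q g d v j i
      else (∏ n ∈ Finset.Icc i (j - 1), d n) * G g v j) = d i * Y := by
    rw [hY, ← nat_gcd_mul]
    refine Finset.gcd_congr rfl fun j hj => ?_
    rw [Finset.mem_Ioc] at hj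
    rw [if_neg (by omega), prod_d_split d hj.1]
    by_cases hj2 : j ≤ i + 1
    · rw [if_pos hj2]
      have hji : j = i + 1 := by omega
      subst hji
      have he : Finset.Icc (i + 1) (i + 1 - 1) = ∅ := Finset.Icc_eq_empty (by omega)
      rw [he, Finset.prod_empty, mul_one, Q]
      simp
    · rw [if_neg hj2, mul_assoc]
  have hA1 : A g d v (i + 1) = Nat.gcd X Y := by
    rw [A, split_gcd g i h1 (le_of_lt h2)]
    have e1 : (Finset.Icc 1 i).gcd (fun j =>
        if j ≤ i + 1 then G g v j / Q g d v j (i + 1)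
        else (∏ n ∈ Finset.Icc (i + 1) (j - 1), d n) * G g v j) = X := by
      rw [hX]
      refine Finset.gcd_congr rfl fun j hj => ?_
      rw [Finset.mem_Icc] at hj
      rw [if_pos (by omega)]
    rw [e1, ← hY]
  have hA0 : A g d v i = Nat.gcd (paraD g d v i * X) (d i * Y) := by
    rw [A, split_gcd g i h1 (le_of_lt h2), hL, hR]
  have hIcc : (Finset.Icc 1 i).gcd (fun j => G g v j / Q g d v j i)
      = paraD g d v i * X := by
    rw [hX, ← nat_gcd_mul]
    exact Finset.gcd_congr rfl fun j hj =>
      div_step g d v (Finset.mem_Icc.mp hj).1 (Finset.mem_Icc.mp hj).2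
  have hDpos : 0 < paraD g d v i := paraD_pos g d v (hd i)
  obtain ⟨e, he⟩ := paraD_dvd_d g d v i
  have hcop : Nat.Coprime e X := by
    have h := paraD_eq g d v i
    rw [hIcc, he, Nat.gcd_mul_left] at h
    exact (Nat.mul_eq_left hDpos.ne').mp h.symm
  rw [hA0, hA1, he, mul_assoc, Nat.gcd_mul_left,
    Nat.Coprime.gcd_mul_left_cancel_right Y hcop]

lemma A_eq_prod (hg : 1 ≤ g) (hd : ∀ n, 0 < d n)
    (hv : (Finset.Icc 1 (2 * g)).gcd (fun j => (v j).natAbs) = 1) :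
    ∀ k, k ≤ g - 1 → A g d v (g - k) = ∏ n ∈ Finset.Ico (g - k) g, paraD g d v n := by
  intro k
  induction k with
  | zero =>
    intro _
    simp [Nat.sub_zero, Finset.Ico_self, A_top g d v hg hv]
  | succ k ih =>
    intro hk
    have hi1 : 1 ≤ g - (k + 1) := by omega
    have hieq : g - (k + 1) + 1 = g - k := by omega
    have hlt : g - (k + 1) < g := by omega
    rw [A_step g d v hd hi1 hlt, hieq, ih (by omega),
      Finset.prod_eq_prod_Ico_succ_bot hlt, hieq]

end VhatAux

/-- Properties of `v̂_i` for a primitive vector `v`. -/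
theorem vhat_properties (g : ℕ) (hg : 1 ≤ g) (d : ℕ → ℕ) (hd : ∀ n, 0 < d n)
    (v : ℕ → ℤ) (hv : (Finset.Icc 1 (2 * g)).gcd (fun j => (v j).natAbs) = 1) :
    (vhat g d v 1 = ∏ i ∈ Finset.Icc 1 (g - 1), paraD g d v i ∧ vhat g d v g = 1) ∧
    (∀ i, 1 ≤ i → i ≤ g - 1 → vhat g d v i ∣ d i * vhat g d v (i + 1)) ∧
    (∀ i, 2 ≤ i → i ≤ g → vhat g d v i ∣ vhat g d v (i - 1)) ∧
    (∀ i, 2 ≤ i → i ≤ g - 1 →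
      vhat g d v i =
        Nat.gcd (vhat g d v (i - 1))
          (Nat.gcd (Int.gcd (v i) (v (g + i))) (d i * vhat g d v (i + 1)))) := by
  classical
  open VhatAux in
  have part2 : ∀ i, 1 ≤ i → i ≤ g - 1 → vhat g d v i ∣ d i * vhat g d v (i + 1) := by
    intro i hi1 hi2
    rw [vhat_eq g d v (i + 1), ← nat_gcd_mul]
    refine Finset.dvd_gcd fun j hj => ?_
    refine (vhat_dvd_T g d v hj).trans ?_
    by_cases h : j ≤ i
    · rw [T, T, if_pos h, if_pos (by omega)]
      exact Dvd.intro_left _ rfl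
    · rw [T_split g d v (by omega)]
  have part3 : ∀ i, 2 ≤ i → i ≤ g → vhat g d v i ∣ vhat g d v (i - 1) := by
    intro i hi1 hi2
    rw [vhat_eq g d v (i - 1)]
    refine Finset.dvd_gcd fun j hj => ?_
    refine (vhat_dvd_T g d v hj).trans ?_
    by_cases h : j ≤ i - 1
    · rw [T, T, if_pos h, if_pos (by omega)]
    · have hs := T_split g d v (i := i - 1) (j := j) (by omega)
      rw [show i - 1 + 1 = i by omega] at hs
      rw [hs]
      exact Dvd.intro_left _ rfl
  refine ⟨⟨?_, vhat_top g d v hg hv⟩, part2, part3, ?_⟩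
  · have h1 := A_eq_prod g d v hg hd hv (g - 1) (le_refl _)
    rw [show g - (g - 1) = 1 by omega] at h1
    rw [← A_one g d v, h1]
    apply Finset.prod_congr _ fun _ _ => rfl
    rw [← Finset.Ico_add_one_right_eq_Icc]
    congr 1
    omega
  · intro i hi1 hi2
    have hig : i ≤ g := by omega
    have hvG : vhat g d v i ∣ Int.gcd (v i) (v (g + i)) :=
      vhat_dvd_G g d v (by omega) hig le_rfl
    refine Nat.dvd_antisymm ?_ ?_
    · exact Nat.dvd_gcd (part3 i hi1 hig)
        (Nat.dvd_gcd hvG (part2 i (by omega) hi2))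
    · rw [vhat_eq g d v i]
      refine Finset.dvd_gcd fun j hj => ?_
      have hjm := Finset.mem_Icc.mp hj
      rcases lt_trichotomy j i with hlt | rfl | hgt
      · refine (Nat.gcd_dvd_left _ _).trans ((vhat_dvd_T g d v hj).trans ?_)
        rw [T, T, if_pos (by omega), if_pos (by omega)]
      · rw [T, if_pos le_rfl]
        exact (Nat.gcd_dvd_right _ _).trans (Nat.gcd_dvd_left _ _)
      · rw [T_split g d v hgt]
        exact ((Nat.gcd_dvd_right _ _).trans (Nat.gcd_dvd_right _ _)).trans
          (mul_dvd_mul_left (d i) (vhat_dvd_T g d v hj))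
end

section
/- Two primitive vectors v, w ∈ ℤ^{2g} are in the same orbit under the paramodular group Γ̃_pol if and only if v̂_i = ŵ_i for all i = 1,…,g, where v̂_i := gcd over j ≤ i of gcd(v_j, v_{g+j}) together with the numbers (d_i⋯d_{j-1})·gcd(v_j, v_{g+j}) for j > i. In particular, if w = vM with M ∈ Γ̃_pol, then v̂_j divides ŵ_j for all j. -/
open Matrix Finset Sum

namespace Paramod

/-- `en d m = d 1 * d 2 * ⋯ * d m`. -/
def en (d : ℕ → ℕ) (m : ℕ) : ℕ := ∏ n ∈ Finset.Icc 1 m, d n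

/-- coefficient `c_{i,k}` (k a zero-based pair index). -/
def cf (d : ℕ → ℕ) (i k : ℕ) : ℕ := if k + 1 ≤ i then 1 else ∏ n ∈ Finset.Icc i k, d n

variable {d : ℕ → ℕ}

lemma en_pos (hd : ∀ n, 0 < d n) (m : ℕ) : 0 < en d m :=
  Finset.prod_pos fun n _ => hd n

lemma cf_pos (hd : ∀ n, 0 < d n) (i k : ℕ) : 0 < cf d i k := by
  unfold cf; split
  · exact one_pos
  · exact Finset.prod_pos fun n _ => hd n

lemma en_dvd_en (h : m ≤ m') : en d m ∣ en d m' :=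
  Finset.prod_dvd_prod_of_subset _ _ _ (Finset.Icc_subset_Icc le_rfl h)

lemma Icc_eq_Ioc (i k : ℕ) (hi : 1 ≤ i) : Finset.Icc i k = Finset.Ioc (i-1) k := by
  rw [← Finset.Icc_add_one_left_eq_Ioc]; congr 1; omega

lemma en_mul_cf (i k : ℕ) (hi : 1 ≤ i) (hk : i ≤ k + 1) :
    en d (i - 1) * cf d i k = en d k := by
  unfold en cf
  rcases Nat.lt_or_ge k i with h | h
  · have hk' : k = i - 1 := by omega
    rw [if_pos (by omega), mul_one, hk']
  · rw [if_neg (by omega), Icc_eq_Ioc i k hi, Icc_eq_Ioc 1 (i-1) le_rfl,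
      Icc_eq_Ioc 1 k le_rfl]
    simp only [Nat.sub_self]  -- (1-1) = 0
    exact Finset.prod_Ioc_consecutive d (by omega) (by omega)

lemma cf_of_le (i k : ℕ) (h : k + 1 ≤ i) : cf d i k = 1 := if_pos h

lemma cf_of_ge (i k : ℕ) (h : i ≤ k) : cf d i k = ∏ n ∈ Finset.Icc i k, d n :=
  if_neg (by omega)

/-- `cf d (i+1) k ∣ cf d i k`. -/
lemma cf_succ_dvd (i k : ℕ) : cf d (i+1) k ∣ cf d i k := by
  unfold cf
  by_cases h1 : k + 1 ≤ i
  · rw [if_pos (by omega), if_pos h1]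
  · rw [if_neg h1]
    by_cases h2 : k + 1 ≤ i + 1
    · rw [if_pos h2]; exact one_dvd _
    · rw [if_neg h2]
      exact Finset.prod_dvd_prod_of_subset _ _ _ (Finset.Icc_subset_Icc (by omega) le_rfl)

/-- main coefficient comparison: if `en m ∣ en k * X` then `cf i m ∣ cf i k * X`. -/
lemma cf_dvd_of_en_dvd (hd : ∀ n, 0 < d n) (i m k : ℕ) (hi : 1 ≤ i) (X : ℤ)
    (h : (en d m : ℤ) ∣ (en d k : ℤ) * X) :
    (cf d i m : ℤ) ∣ (cf d i k : ℤ) * X := by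
  rcases Nat.lt_or_ge m i with hm | hm
  · rw [cf_of_le i m (by omega)]; exact one_dvd _
  · -- m ≥ i
    have hem : (en d (i-1) : ℤ) * (cf d i m : ℤ) = en d m := by
      rw [← Nat.cast_mul, en_mul_cf i m hi (by omega)]
    have hne : (en d (i-1) : ℤ) ≠ 0 := by
      exact_mod_cast (en_pos hd (i-1)).ne'
    rcases Nat.lt_or_ge k i with hk | hk
    · -- k < i : cf i k = 1, en k ∣ en (i-1)
      rw [cf_of_le i k (by omega)]
      simp only [Nat.cast_one, one_mul]
      have h2 : (en d m : ℤ) ∣ (en d (i-1) : ℤ) * X := by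
        obtain ⟨c, hc⟩ := (en_dvd_en (d := d) (by omega : k ≤ i - 1))
        refine h.trans ⟨c, ?_⟩
        push_cast [hc]; ring
      rw [← hem] at h2
      exact (mul_dvd_mul_iff_left hne).mp h2
    · -- k ≥ i
      have hek : (en d (i-1) : ℤ) * (cf d i k : ℤ) = en d k := by
        rw [← Nat.cast_mul, en_mul_cf i k hi (by omega)]
      have h2 : (en d (i-1) : ℤ) * ((cf d i m : ℤ)) ∣ (en d (i-1)) * ((cf d i k : ℤ) * X) := by
        rw [hem, ← mul_assoc, hek]; exact h
      exact (mul_dvd_mul_iff_left hne).mp h2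


section Group

variable (g : ℕ) (d : ℕ → ℕ)

/-- the diagonal polarization block. -/
def De : Matrix (Fin g) (Fin g) ℤ := diagonal fun k : Fin g => (en d (k : ℕ) : ℤ)

/-- the symplectic-type form. -/
def La : Matrix (Fin g ⊕ Fin g) (Fin g ⊕ Fin g) ℤ :=
  fromBlocks 0 (De g d) (-(De g d)) 0

/-- the paramodular group. -/
def Grp (M : Matrix (Fin g ⊕ Fin g) (Fin g ⊕ Fin g) ℤ) : Prop :=
  M.det = 1 ∧ M * La g d * Mᵀ = La g d

/-- orbit relation. -/
def Rel (v w : (Fin g ⊕ Fin g) → ℤ) : Prop :=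
  ∃ M, Grp g d M ∧ v ᵥ* M = w

variable {g d}

lemma Grp.one : Grp g d 1 := by constructor <;> simp

lemma Grp.mul {M N} (hM : Grp g d M) (hN : Grp g d N) : Grp g d (M * N) := by
  refine ⟨by rw [Matrix.det_mul, hM.1, hN.1, one_mul], ?_⟩
  have h : M * N * La g d * (M * N)ᵀ = M * (N * La g d * Nᵀ) * Mᵀ := by
    rw [Matrix.transpose_mul]; simp only [Matrix.mul_assoc]
  rw [h, hN.2, hM.2]

lemma Grp.inv {M} (hM : Grp g d M) : Grp g d M⁻¹ ∧ M * M⁻¹ = 1 ∧ M⁻¹ * M = 1 := by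
  have hu : IsUnit M.det := by rw [hM.1]; exact isUnit_one
  have h1 : M * M⁻¹ = 1 := Matrix.mul_nonsing_inv M hu
  have h2 : M⁻¹ * M = 1 := Matrix.nonsing_inv_mul M hu
  refine ⟨⟨by rw [Matrix.det_nonsing_inv, hM.1]; simp, ?_⟩, h1, h2⟩
  calc M⁻¹ * La g d * M⁻¹ᵀ
      = M⁻¹ * (M * La g d * Mᵀ) * M⁻¹ᵀ := by rw [hM.2]
    _ = (M⁻¹ * M) * (La g d * (M⁻¹ * M)ᵀ) := by
        rw [Matrix.transpose_mul]; simp only [Matrix.mul_assoc]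
    _ = La g d := by rw [h2]; simp

lemma Rel.refl (v) : Rel g d v v := ⟨1, Grp.one, by simp⟩

lemma Rel.trans {u v w} (h1 : Rel g d u v) (h2 : Rel g d v w) : Rel g d u w := by
  obtain ⟨M, hM, rfl⟩ := h1
  obtain ⟨N, hN, rfl⟩ := h2
  exact ⟨M * N, hM.mul hN, by rw [Matrix.vecMul_vecMul]⟩

lemma Rel.symm {v w} (h : Rel g d v w) : Rel g d w v := by
  obtain ⟨M, hM, rfl⟩ := h
  obtain ⟨hMi, h1, h2⟩ := hM.inv
  exact ⟨M⁻¹, hMi, by rw [Matrix.vecMul_vecMul, h1, Matrix.vecMul_one]⟩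

/-- index forgetting which half. -/
def idx : Fin g ⊕ Fin g → Fin g := Sum.elim id id

lemma entry_dvd {X Y : Matrix (Fin g) (Fin g) ℤ} (h : De g d * Xᵀ = Y * De g d)
    (j i : Fin g) : (en d (j : ℕ) : ℤ) ∣ (en d (i : ℕ) : ℤ) * X j i := by
  have h' := congrFun (congrFun h i) j
  rw [De, Matrix.diagonal_mul, Matrix.mul_diagonal, Matrix.transpose_apply] at h'
  exact ⟨Y i j, by rw [h']; ring⟩

/-- key congruence satisfied by elements of the paramodular group:
`e_{row} ∣ e_{col} * entry`. -/
lemma Grp.key {M} (hM : Grp g d M) (r c : Fin g ⊕ Fin g) :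
    (en d (idx r : ℕ) : ℤ) ∣ (en d (idx c : ℕ) : ℤ) * M r c := by
  obtain ⟨hMi, h1, h2⟩ := hM.inv
  have hEq : La g d * Mᵀ = M⁻¹ * La g d := by
    calc La g d * Mᵀ = (M⁻¹ * M) * La g d * Mᵀ := by rw [h2, one_mul]
      _ = M⁻¹ * (M * La g d * Mᵀ) := by simp only [Matrix.mul_assoc]
      _ = M⁻¹ * La g d := by rw [hM.2]
  set A := M.toBlocks₁₁ with hA; set B := M.toBlocks₁₂ with hB
  set C := M.toBlocks₂₁ with hC; set D := M.toBlocks₂₂ with hD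
  set A' := (M⁻¹).toBlocks₁₁; set B' := (M⁻¹).toBlocks₁₂
  set C' := (M⁻¹).toBlocks₂₁; set D' := (M⁻¹).toBlocks₂₂
  have hNb : M⁻¹ = fromBlocks A' B' C' D' := (Matrix.fromBlocks_toBlocks M⁻¹).symm
  have hMb : M = fromBlocks A B C D := (Matrix.fromBlocks_toBlocks M).symm
  rw [hNb, hMb, La] at hEq
  rw [Matrix.fromBlocks_transpose, Matrix.fromBlocks_multiply, Matrix.fromBlocks_multiply] at hEq
  simp only [Matrix.zero_mul, Matrix.mul_zero, zero_add, add_zero, Matrix.neg_mul,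
    Matrix.mul_neg, neg_neg] at hEq
  have e11 := congrArg Matrix.toBlocks₁₁ hEq
  have e12 := congrArg Matrix.toBlocks₁₂ hEq
  have e21 := congrArg Matrix.toBlocks₂₁ hEq
  have e22 := congrArg Matrix.toBlocks₂₂ hEq
  simp only [Matrix.toBlocks_fromBlocks₁₁, Matrix.toBlocks_fromBlocks₁₂,
    Matrix.toBlocks_fromBlocks₂₁, Matrix.toBlocks_fromBlocks₂₂] at e11 e12 e21 e22
  rcases r with j | j <;> rcases c with i | i
  · have h3 : M (inl j) (inl i) = A j i := rfl
    rw [h3]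
    exact entry_dvd (Y := D') (neg_inj.mp e21) j i
  · have h3 : M (inl j) (inr i) = B j i := rfl
    rw [h3]
    refine entry_dvd (Y := -B') ?_ j i
    rw [e11, Matrix.neg_mul]
  · have h3 : M (inr j) (inl i) = C j i := rfl
    rw [h3]
    refine entry_dvd (Y := -C') ?_ j i
    rw [Matrix.neg_mul, ← e22, neg_neg]
  · have h3 : M (inr j) (inr i) = D j i := rfl
    rw [h3]
    exact entry_dvd (Y := A') e12 j i

end Group


section Invariant

variable (g : ℕ) (d : ℕ → ℕ)

/-- the invariant `v̂_i`, Fin-indexed version. -/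
def hF (u : (Fin g ⊕ Fin g) → ℤ) (i : ℕ) : ℕ :=
  Finset.univ.gcd fun k : Fin g => cf d i (k : ℕ) * Int.gcd (u (inl k)) (u (inr k))

variable {g d}

lemma hF_dvd_inl (u : (Fin g ⊕ Fin g) → ℤ) (i : ℕ) (k : Fin g) :
    (hF g d u i : ℤ) ∣ (cf d i (k : ℕ) : ℤ) * u (inl k) := by
  have h1 : hF g d u i ∣ cf d i (k : ℕ) * Int.gcd (u (inl k)) (u (inr k)) :=
    Finset.gcd_dvd (Finset.mem_univ k)
  have h2 : ((cf d i (k : ℕ) * Int.gcd (u (inl k)) (u (inr k)) : ℕ) : ℤ) ∣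
      (cf d i (k : ℕ) : ℤ) * u (inl k) := by
    push_cast
    exact mul_dvd_mul_left _ (Int.gcd_dvd_left _ _)
  exact (Int.natCast_dvd_natCast.mpr h1).trans h2

lemma hF_dvd_inr (u : (Fin g ⊕ Fin g) → ℤ) (i : ℕ) (k : Fin g) :
    (hF g d u i : ℤ) ∣ (cf d i (k : ℕ) : ℤ) * u (inr k) := by
  have h1 : hF g d u i ∣ cf d i (k : ℕ) * Int.gcd (u (inl k)) (u (inr k)) :=
    Finset.gcd_dvd (Finset.mem_univ k)
  have h2 : ((cf d i (k : ℕ) * Int.gcd (u (inl k)) (u (inr k)) : ℕ) : ℤ) ∣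
      (cf d i (k : ℕ) : ℤ) * u (inr k) := by
    push_cast
    exact mul_dvd_mul_left _ (Int.gcd_dvd_right _ _)
  exact (Int.natCast_dvd_natCast.mpr h1).trans h2

lemma hF_dvd_abs (u : (Fin g ⊕ Fin g) → ℤ) (i : ℕ) (k : Fin g) :
    ∀ a ∈ ({inl k, inr k} : Set _), (hF g d u i : ℤ) ∣ (cf d i (k : ℕ) : ℤ) * u a := by
  rintro a (rfl | rfl)
  · exact hF_dvd_inl u i k
  · exact hF_dvd_inr u i k

lemma dvd_hF {n : ℕ} (u : (Fin g ⊕ Fin g) → ℤ) (i : ℕ)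
    (h : ∀ k : Fin g, (n : ℤ) ∣ (cf d i (k : ℕ) : ℤ) * u (inl k) ∧
      (n : ℤ) ∣ (cf d i (k : ℕ) : ℤ) * u (inr k)) :
    n ∣ hF g d u i := by
  refine Finset.dvd_gcd fun k _ => ?_
  have key : (n : ℤ) ∣ ((cf d i (k : ℕ) * Int.gcd (u (inl k)) (u (inr k)) : ℕ) : ℤ) := by
    push_cast
    rw [show (cf d i (k : ℕ) : ℤ) * (Int.gcd (u (inl k)) (u (inr k)) : ℤ) =
      (Int.gcd ((cf d i (k : ℕ) : ℤ) * u (inl k)) ((cf d i (k : ℕ) : ℤ) * u (inr k)) : ℤ) from ?_]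
    · exact Int.dvd_coe_gcd (h k).1 (h k).2
    · rw [Int.gcd_mul_left]
      push_cast
      simp
  exact Int.natCast_dvd_natCast.mp key

/-- divisibility of the invariants under the paramodular group. -/
lemma hF_dvd_of_grp (hd : ∀ n, 0 < d n) {M} (hM : Grp g d M)
    (v : (Fin g ⊕ Fin g) → ℤ) (i : ℕ) (hi : 1 ≤ i) :
    hF g d v i ∣ hF g d (v ᵥ* M) i := by
  refine dvd_hF _ i fun k => ⟨?_, ?_⟩ <;>
  · set b : Fin g ⊕ Fin g := _
    show (hF g d v i : ℤ) ∣ (cf d i (k : ℕ) : ℤ) * (v ᵥ* M) b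
    have hvm : (v ᵥ* M) b = ∑ a, v a * M a b := by
      simp [Matrix.vecMul, dotProduct]
    have hidx : idx b = k := rfl
    rw [hvm, Finset.mul_sum]
    refine Finset.dvd_sum fun a _ => ?_
    have e1 : (hF g d v i : ℤ) ∣ (cf d i (idx a : ℕ) : ℤ) * v a := by
      rcases a with m | m
      · exact hF_dvd_inl v i m
      · exact hF_dvd_inr v i m
    have e2 : (cf d i (idx a : ℕ) : ℤ) ∣ (cf d i (k : ℕ) : ℤ) * M a b := by
      have h5 := hM.key a b
      rw [hidx] at h5
      exact cf_dvd_of_en_dvd hd i _ _ hi (M a b) h5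
    obtain ⟨z, hz⟩ := e2
    have e3 : (cf d i (k : ℕ) : ℤ) * (v a * M a b) =
        z * ((cf d i (idx a : ℕ) : ℤ) * v a) := by
      rw [show (cf d i (k : ℕ) : ℤ) * (v a * M a b) =
        ((cf d i (k : ℕ) : ℤ) * M a b) * v a from by ring, hz]
      ring
    rw [e3]
    exact Dvd.dvd.mul_left e1 z

/-- invariance of the invariants under the orbit relation. -/
lemma Rel.hF_eq (hd : ∀ n, 0 < d n) {v w} (h : Rel g d v w) (i : ℕ) (hi : 1 ≤ i) :
    hF g d v i = hF g d w i := by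
  obtain ⟨M, hM, rfl⟩ := h
  have h1 := hF_dvd_of_grp hd hM v i hi
  obtain ⟨N, hN, hvw⟩ := Rel.symm (v := v) (w := v ᵥ* M) ⟨M, hM, rfl⟩
  have h2 := hF_dvd_of_grp hd hN (v ᵥ* M) i hi
  rw [hvw] at h2
  exact Nat.dvd_antisymm h1 h2

end Invariant


section Moves

variable {g : ℕ} {d : ℕ → ℕ}

lemma Grp.up (S : Matrix (Fin g) (Fin g) ℤ) (hS : De g d * Sᵀ = S * De g d) :
    Grp g d (fromBlocks 1 S 0 1) := by
  constructor
  · rw [Matrix.det_fromBlocks_zero₂₁]; simp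
  · rw [La, Matrix.fromBlocks_transpose, Matrix.fromBlocks_multiply, Matrix.fromBlocks_multiply]
    simp only [Matrix.mul_one, Matrix.one_mul, Matrix.mul_zero, Matrix.zero_mul,
      add_zero, zero_add, Matrix.neg_mul, Matrix.mul_neg, Matrix.transpose_one,
      Matrix.transpose_zero, neg_zero, neg_neg]
    rw [hS, neg_add_cancel]

lemma Grp.low (T : Matrix (Fin g) (Fin g) ℤ) (hT : T * De g d = De g d * Tᵀ) :
    Grp g d (fromBlocks 1 0 T 1) := by
  constructor
  · rw [Matrix.det_fromBlocks_zero₁₂]; simp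
  · rw [La, Matrix.fromBlocks_transpose, Matrix.fromBlocks_multiply, Matrix.fromBlocks_multiply]
    simp only [Matrix.mul_one, Matrix.one_mul, Matrix.mul_zero, Matrix.zero_mul,
      add_zero, zero_add, Matrix.neg_mul, Matrix.mul_neg, Matrix.transpose_one,
      Matrix.transpose_zero, neg_zero, neg_neg]
    rw [hT, neg_add_cancel]

lemma Grp.dg (U V : Matrix (Fin g) (Fin g) ℤ) (hUV : U * De g d * Vᵀ = De g d)
    (hdet : U.det * V.det = 1) : Grp g d (fromBlocks U 0 0 V) := by
  constructor
  · rw [Matrix.det_fromBlocks_zero₂₁]; exact hdet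
  · rw [La, Matrix.fromBlocks_transpose, Matrix.fromBlocks_multiply, Matrix.fromBlocks_multiply]
    simp only [Matrix.mul_one, Matrix.one_mul, Matrix.mul_zero, Matrix.zero_mul,
      add_zero, zero_add, Matrix.neg_mul, Matrix.mul_neg, Matrix.transpose_one,
      Matrix.transpose_zero, neg_zero, neg_neg]
    have h2 : V * De g d * Uᵀ = De g d := by
      have := congrArg Matrix.transpose hUV
      rwa [Matrix.transpose_mul, Matrix.transpose_mul, Matrix.transpose_transpose,
        De, Matrix.diagonal_transpose, ← De, ← Matrix.mul_assoc] at this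
    rw [Matrix.mul_assoc, ← Matrix.mul_assoc U (De g d) Vᵀ, hUV, h2]

end Moves


section Moves2

variable {g : ℕ} {d : ℕ → ℕ}

/-- update the `k`-th coordinate pair. -/
def updP (u : Fin g ⊕ Fin g → ℤ) (k : Fin g) (a b : ℤ) : Fin g ⊕ Fin g → ℤ :=
  Function.update (Function.update u (inl k) a) (inr k) b

@[simp] lemma updP_inl (u : Fin g ⊕ Fin g → ℤ) (k : Fin g) (a b : ℤ) (j : Fin g) :
    updP u k a b (inl j) = if j = k then a else u (inl j) := by
  unfold updP
  rw [Function.update_of_ne (by simp)]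
  by_cases h : j = k
  · subst h; rw [Function.update_self, if_pos rfl]
  · rw [Function.update_of_ne (by simpa using h), if_neg h]

@[simp] lemma updP_inr (u : Fin g ⊕ Fin g → ℤ) (k : Fin g) (a b : ℤ) (j : Fin g) :
    updP u k a b (inr j) = if j = k then b else u (inr j) := by
  unfold updP
  by_cases h : j = k
  · subst h; rw [Function.update_self, if_pos rfl]
  · rw [Function.update_of_ne (by simpa using h), Function.update_of_ne (by simp), if_neg h]

lemma updP_updP (u : Fin g ⊕ Fin g → ℤ) (k : Fin g) (a b a' b' : ℤ) :
    updP (updP u k a b) k a' b' = updP u k a' b' := by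
  funext x
  rcases x with j | j <;> simp [updP_inl, updP_inr] <;> split <;> rfl

lemma updP_congr {u : Fin g ⊕ Fin g → ℤ} {k : Fin g} {a b a' b' : ℤ}
    (h1 : a = a') (h2 : b = b') : updP u k a b = updP u k a' b' := by rw [h1, h2]

lemma updP_eq_self (u : Fin g ⊕ Fin g → ℤ) (k : Fin g)  :
    updP u k (u (inl k)) (u (inr k)) = u := by
  funext x
  rcases x with j | j <;> simp <;> intro h <;> rw [h]

/-- elementary move: add `t·x_k` to `y_k`. -/
lemma rel_upk (u : Fin g ⊕ Fin g → ℤ) (k : Fin g) (t : ℤ) :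
    Rel g d u (updP u k (u (inl k)) (u (inr k) + t * u (inl k))) := by
  set S : Matrix (Fin g) (Fin g) ℤ := diagonal (fun j => if j = k then t else 0) with hSdef
  have hS : De g d * Sᵀ = S * De g d := by
    rw [hSdef, De, Matrix.diagonal_transpose, Matrix.diagonal_mul_diagonal,
      Matrix.diagonal_mul_diagonal]
    ext j m
    rcases eq_or_ne j m with rfl | hne
    · simp only [Matrix.diagonal_apply_eq]; split <;> ring
    · simp [Matrix.diagonal_apply_ne _ hne]
  refine ⟨_, Grp.up S hS, ?_⟩
  rw [Matrix.vecMul_fromBlocks]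
  funext x
  rcases x with j | j
  · simp only [Sum.elim_inl, Matrix.vecMul_one, Matrix.vecMul_zero, add_zero, Pi.add_apply,
      updP_inl, Function.comp_apply]
    split <;> simp_all
  · simp only [Sum.elim_inr, Matrix.vecMul_one, Matrix.vecMul_zero, zero_add, Pi.add_apply,
      updP_inr, Function.comp_apply, hSdef, Matrix.vecMul_diagonal]
    split <;> rename_i h
    · subst h; ring
    · simp

/-- elementary move: add `t·y_k` to `x_k`. -/
lemma rel_lowk (u : Fin g ⊕ Fin g → ℤ) (k : Fin g) (t : ℤ) :
    Rel g d u (updP u k (u (inl k) + t * u (inr k)) (u (inr k))) := by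
  set T : Matrix (Fin g) (Fin g) ℤ := diagonal (fun j => if j = k then t else 0) with hTdef
  have hT : T * De g d = De g d * Tᵀ := by
    rw [hTdef, De, Matrix.diagonal_transpose, Matrix.diagonal_mul_diagonal,
      Matrix.diagonal_mul_diagonal]
    ext j m
    rcases eq_or_ne j m with rfl | hne
    · simp only [Matrix.diagonal_apply_eq]; split <;> ring
    · simp [Matrix.diagonal_apply_ne _ hne]
  refine ⟨_, Grp.low T hT, ?_⟩
  rw [Matrix.vecMul_fromBlocks]
  funext x
  rcases x with j | j
  · simp only [Sum.elim_inl, Matrix.vecMul_one, Matrix.vecMul_zero, Pi.add_apply,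
      updP_inl, Function.comp_apply, hTdef, Matrix.vecMul_diagonal]
    split <;> rename_i h
    · subst h; ring
    · simp
  · simp only [Sum.elim_inr, Matrix.vecMul_one, Matrix.vecMul_zero, add_zero, zero_add,
      Pi.add_apply, updP_inr, Function.comp_apply]
    split <;> simp_all

/-- sign flip at the pair `k`. -/
lemma rel_flipk (u : Fin g ⊕ Fin g → ℤ) (k : Fin g) :
    Rel g d u (updP u k (-(u (inl k))) (-(u (inr k)))) := by
  set U : Matrix (Fin g) (Fin g) ℤ := diagonal (fun j => if j = k then -1 else 1) with hUdef
  have hUV : U * De g d * Uᵀ = De g d := by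
    rw [hUdef, De, Matrix.diagonal_transpose, Matrix.diagonal_mul_diagonal,
      Matrix.diagonal_mul_diagonal]
    ext j m
    rcases eq_or_ne j m with rfl | hne
    · simp only [Matrix.diagonal_apply_eq]; split <;> ring
    · simp [Matrix.diagonal_apply_ne _ hne]
  have hdet : U.det * U.det = 1 := by
    rw [hUdef, Matrix.det_diagonal, ← Finset.prod_mul_distrib]
    apply Finset.prod_eq_one
    intro j _; split <;> ring
  refine ⟨_, Grp.dg U U hUV hdet, ?_⟩
  rw [Matrix.vecMul_fromBlocks]
  funext x
  rcases x with j | j <;>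
  · simp only [Sum.elim_inl, Sum.elim_inr, Matrix.vecMul_one, Matrix.vecMul_zero, add_zero,
      zero_add, updP_inl, updP_inr, Function.comp_apply, hUdef, Matrix.vecMul_diagonal]
    split <;> rename_i h
    · subst h; ring
    · ring

end Moves2


section Moves3

variable {g : ℕ} {d : ℕ → ℕ}

lemma en_mul_between (k l : ℕ) (h : k ≤ l) :
    en d k * ∏ n ∈ Finset.Icc (k+1) l, d n = en d l := by
  unfold en
  rw [show Finset.Icc 1 k = Finset.Ioc 0 k from Finset.Icc_add_one_left_eq_Ioc 0 k,
    show Finset.Icc (k+1) l = Finset.Ioc k l from Finset.Icc_add_one_left_eq_Ioc k l,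
    show Finset.Icc 1 l = Finset.Ioc 0 l from Finset.Icc_add_one_left_eq_Ioc 0 l]
  exact Finset.prod_Ioc_consecutive d (Nat.zero_le k) h

/-- the two-index unipotent move: `y_k += q·x_l`, `y_l += x_k`. -/
lemma rel_up2 (u : Fin g ⊕ Fin g → ℤ) (k l : Fin g) (hkl : (k : ℕ) < (l : ℕ)) :
    Rel g d u (Function.update (Function.update u (inr k)
        (u (inr k) + (∏ n ∈ Finset.Icc ((k:ℕ)+1) (l:ℕ), d n : ℕ) * u (inl l)))
      (inr l) (u (inr l) + u (inl k))) := by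
  have hne : k ≠ l := Fin.ne_of_val_ne (by omega)
  set q : ℤ := ((∏ n ∈ Finset.Icc ((k:ℕ)+1) (l:ℕ), d n : ℕ) : ℤ) with hqdef
  have hq : (en d (k:ℕ) : ℤ) * q = en d (l:ℕ) := by
    rw [hqdef, ← Nat.cast_mul, en_mul_between _ _ (le_of_lt hkl)]
  set S : Matrix (Fin g) (Fin g) ℤ :=
    Matrix.of (fun x y => if x = k ∧ y = l then 1 else if x = l ∧ y = k then q else 0)
    with hSdef
  have Skl : S k l = 1 := by simp [hSdef]
  have Slk : S l k = q := by simp [hSdef, hne, hne.symm]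
  have Sother : ∀ x y, ¬(x = k ∧ y = l) → ¬(x = l ∧ y = k) → S x y = 0 := by
    intro x y h1 h2
    simp only [hSdef, Matrix.of_apply, if_neg h1, if_neg h2]
  have hS : De g d * Sᵀ = S * De g d := by
    ext a b
    rw [De, Matrix.diagonal_mul, Matrix.mul_diagonal, Matrix.transpose_apply]
    by_cases h1 : a = k ∧ b = l
    · obtain ⟨rfl, rfl⟩ := h1
      rw [Slk, Skl, hq, one_mul]
    · by_cases h2 : a = l ∧ b = k
      · obtain ⟨rfl, rfl⟩ := h2
        rw [Skl, Slk, mul_one, mul_comm, hq]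
      · rw [Sother b a (fun ⟨x1, x2⟩ => h2 ⟨x2, x1⟩) (fun ⟨x1, x2⟩ => h1 ⟨x2, x1⟩),
          Sother a b h1 h2]
        simp
  refine ⟨_, Grp.up S hS, ?_⟩
  rw [Matrix.vecMul_fromBlocks]
  have hsum : ∀ j : Fin g, ((u ∘ inl) ᵥ* S) j =
      (if j = k then q * u (inl l) else 0) + (if j = l then u (inl k) else 0) := by
    intro j
    have hterm : ∀ a : Fin g, (u ∘ inl) a * S a j =
        (if a = l then (if j = k then q * u (inl l) else 0) else 0) +
        (if a = k then (if j = l then u (inl k) else 0) else 0) := by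
      intro a
      simp only [hSdef, Matrix.of_apply, Function.comp_apply]
      by_cases h1 : a = k ∧ j = l
      · obtain ⟨rfl, rfl⟩ := h1
        simp [hne, hne.symm]
      · by_cases h2 : a = l ∧ j = k
        · obtain ⟨rfl, rfl⟩ := h2
          simp [hne, hne.symm]
          ring
        · rw [if_neg h1, if_neg h2, mul_zero]
          rcases Decidable.not_and_iff_or_not.mp h1 with h | h <;>
            rcases Decidable.not_and_iff_or_not.mp h2 with h' | h' <;>
            simp [h, h']
    show (∑ a, (u ∘ inl) a * S a j) = _
    rw [Finset.sum_congr rfl fun a _ => hterm a, Finset.sum_add_distrib,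
      Finset.sum_ite_eq' Finset.univ l, Finset.sum_ite_eq' Finset.univ k]
    simp
  funext x
  rcases x with j | j
  · simp only [Sum.elim_inl, Matrix.vecMul_one, Matrix.vecMul_zero, add_zero,
      Function.comp_apply]
    rw [Function.update_of_ne (by simp), Function.update_of_ne (by simp)]
  · simp only [Sum.elim_inr, Matrix.vecMul_one, Matrix.vecMul_zero, zero_add, Pi.add_apply,
      Function.comp_apply, hsum j]
    by_cases hjl : j = l
    · subst hjl
      rw [Function.update_self, if_neg (fun h => hne h.symm), if_pos rfl]
      ring
    · rw [Function.update_of_ne (by simpa using hjl), if_neg hjl]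
      by_cases hjk : j = k
      · subst hjk
        rw [Function.update_self, if_pos rfl]
        ring
      · rw [Function.update_of_ne (by simpa using hjk), if_neg hjk]
        ring

end Moves3


section Pair

variable {g : ℕ} {d : ℕ → ℕ}

lemma int_gcd_emod (a b : ℤ) : Int.gcd b (a % b) = Int.gcd a b := by
  have hab : a = a % b + b * (a / b) := by rw [Int.emod_def]; ring
  apply Nat.dvd_antisymm
  · refine Int.natCast_dvd_natCast.mp (Int.dvd_coe_gcd ?_ ?_)
    · calc (Int.gcd b (a % b) : ℤ) ∣ (a % b) + b * (a/b) := by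
            exact dvd_add (Int.gcd_dvd_right _ _) ((Int.gcd_dvd_left _ _).mul_right _)
        _ = a := hab.symm
    · exact (Int.gcd_dvd_left _ _)
  · refine Int.natCast_dvd_natCast.mp (Int.dvd_coe_gcd ?_ ?_)
    · exact (Int.gcd_dvd_right _ _)
    · calc (Int.gcd a b : ℤ) ∣ a - b * (a/b) :=
            dvd_sub (Int.gcd_dvd_left _ _) ((Int.gcd_dvd_right _ _).mul_right _)
        _ = a % b := by rw [Int.emod_def]

lemma rel_pair_zero (u : Fin g ⊕ Fin g → ℤ) (k : Fin g) (h : u (inr k) = 0) :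
    Rel g d u (updP u k (Int.gcd (u (inl k)) (u (inr k)) : ℤ) 0) := by
  rcases le_or_gt 0 (u (inl k)) with ha | ha
  · have : updP u k (Int.gcd (u (inl k)) (u (inr k)) : ℤ) 0 = u := by
      rw [h]
      rw [show (Int.gcd (u (inl k)) 0 : ℤ) = u (inl k) from by
        rw [Int.gcd_zero_right, Int.natAbs_of_nonneg ha], ← h]
      exact updP_eq_self u k
    rw [this]; exact Rel.refl u
  · have h2 := rel_flipk (d := d) u k
    have : updP u k (-(u (inl k))) (-(u (inr k))) =
        updP u k (Int.gcd (u (inl k)) (u (inr k)) : ℤ) 0 := by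
      apply updP_congr
      · rw [h, Int.gcd_zero_right]
        rw [Int.ofNat_natAbs_of_nonpos (le_of_lt ha)]
      · rw [h, neg_zero]
    rwa [this] at h2

lemma rel_pair_aux :
    ∀ n (u : Fin g ⊕ Fin g → ℤ) (k : Fin g), (u (inr k)).natAbs ≤ n →
      Rel g d u (updP u k (Int.gcd (u (inl k)) (u (inr k)) : ℤ) 0) := by
  intro n
  induction n with
  | zero =>
    intro u k h
    exact rel_pair_zero u k (by omega)
  | succ n ih =>
    intro u k h
    by_cases hb : u (inr k) = 0
    · exact rel_pair_zero u k hb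
    · set a := u (inl k) with hadef
      set b := u (inr k) with hbdef
      set r := a % b with hrdef
      have hr0 : 0 ≤ r := Int.emod_nonneg a hb
      have hrb : r.natAbs < b.natAbs := by
        have : r < (b.natAbs : ℤ) := by
          rcases lt_or_gt_of_ne hb with hneg | hpos
          · have : a % b = a % (-b) := (Int.emod_neg a b).symm
            rw [hrdef, this]
            have := Int.emod_lt_of_pos a (by omega : 0 < -b)
            omega
          · have := Int.emod_lt_of_pos a hpos
            omega
        omega
      -- step 1 : x_k ← a - (a/b)*b = r
      have s1 := rel_lowk (d := d) u k (-(a / b))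
      set u1 := updP u k (u (inl k) + -(a / b) * u (inr k)) (u (inr k)) with hu1def
      have hu1 : u1 = updP u k r b := by
        apply updP_congr
        · rw [hrdef, Int.emod_def]; ring
        · rfl
      rw [hu1] at s1
      -- step 2 : y_k ← b - r
      have s2 := rel_upk (d := d) (updP u k r b) k (-1)
      rw [updP_inr, updP_inl, if_pos rfl, if_pos rfl, updP_updP] at s2
      set u2 := updP u k r (b + -1 * r) with hu2def
      -- step 3 : x_k ← r + (b - r) = b
      have s3 := rel_lowk (d := d) u2 k 1
      rw [hu2def, updP_inr, updP_inl, if_pos rfl, if_pos rfl, updP_updP] at s3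
      set u3 := updP u k (r + 1 * (b + -1 * r)) (b + -1 * r) with hu3def
      -- step 4 : y_k ← (b - r) - b = -r
      have s4 := rel_upk (d := d) u3 k (-1)
      rw [hu3def, updP_inr, updP_inl, if_pos rfl, if_pos rfl, updP_updP] at s4
      set u4 := updP u k (r + 1 * (b + -1 * r)) (b + -1 * r + -1 * (r + 1 * (b + -1 * r)))
        with hu4def
      have hu4 : u4 = updP u k b (-r) := by
        apply updP_congr <;> ring
      rw [hu4] at s4
      -- apply the induction hypothesis
      have h5 : ((updP u k b (-r)) (inr k)).natAbs ≤ n := by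
        rw [updP_inr, if_pos rfl]
        omega
      have s5 := ih (updP u k b (-r)) k h5
      rw [updP_inl, updP_inr, if_pos rfl, if_pos rfl, updP_updP] at s5
      have hg : (Int.gcd b (-r) : ℤ) = (Int.gcd a b : ℤ) := by
        congr 1
        rw [show Int.gcd b (-r) = Int.gcd b r from by simp, hrdef, int_gcd_emod]
      rw [hg] at s5
      exact ((s1.trans s2).trans (s3.trans s4)).trans s5

/-- reduce the pair `k` to `(gcd, 0)`. -/
lemma rel_pair (u : Fin g ⊕ Fin g → ℤ) (k : Fin g) :
    Rel g d u (updP u k (Int.gcd (u (inl k)) (u (inr k)) : ℤ) 0) :=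
  rel_pair_aux (u (inr k)).natAbs u k le_rfl

end Pair


section GM

variable {g : ℕ} {d : ℕ → ℕ}

/-- the key `gcd` move on two `x`-coordinates (with vanishing `y` part):
`x_k ← gcd(x_k, q·x_l)`, `x_l ← gcd(x_k, x_l)` where `q = d_{k+1}⋯d_l`. -/
lemma rel_gm (u : Fin g ⊕ Fin g → ℤ) (k l : Fin g) (hkl : (k : ℕ) < (l : ℕ))
    (hy : ∀ j, u (inr j) = 0) :
    Rel g d u (Function.update (Function.update u (inl k)
      (Int.gcd (u (inl k)) ((∏ n ∈ Finset.Icc ((k:ℕ)+1) (l:ℕ), d n : ℕ) * u (inl l)) : ℤ))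
      (inl l) (Int.gcd (u (inl k)) (u (inl l)) : ℤ)) := by
  have hne : k ≠ l := Fin.ne_of_val_ne (by omega)
  set q : ℤ := ((∏ n ∈ Finset.Icc ((k:ℕ)+1) (l:ℕ), d n : ℕ) : ℤ) with hqdef
  set x := fun j => u (inl j) with hxdef
  have s1 := rel_up2 (d := d) u k l hkl
  set u1 := Function.update (Function.update u (inr k) (u (inr k) + q * u (inl l)))
    (inr l) (u (inr l) + u (inl k)) with hu1def
  have hu1inl : ∀ j, u1 (inl j) = x j := by
    intro j
    rw [hu1def, Function.update_of_ne (by simp), Function.update_of_ne (by simp), hxdef]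
  have hu1k : u1 (inr k) = q * x l := by
    rw [hu1def, Function.update_of_ne (by simp [hne]), Function.update_self, hy k, zero_add,
      hxdef]
  have hu1l : u1 (inr l) = x k := by
    rw [hu1def, Function.update_self, hy l, zero_add, hxdef]
  have hu1o : ∀ j, j ≠ k → j ≠ l → u1 (inr j) = 0 := by
    intro j h1 h2
    rw [hu1def, Function.update_of_ne (by simp [h2]), Function.update_of_ne (by simp [h1]),
      hy j]
  have s2 := rel_pair (d := d) u1 k
  set u2 := updP u1 k (Int.gcd (u1 (inl k)) (u1 (inr k)) : ℤ) 0 with hu2def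
  have hu2 : u2 = updP u1 k (Int.gcd (x k) (q * x l) : ℤ) 0 := by
    apply updP_congr
    · rw [hu1inl, hu1k]
    · rfl
  have s3 := rel_pair (d := d) u2 l
  refine (s1.trans (s2.trans ?_))
  have e1 : u2 (inl l) = x l := by
    rw [hu2def, updP_inl, if_neg (fun h => hne h.symm), hu1inl]
  have e2 : u2 (inr l) = x k := by
    rw [hu2def, updP_inr, if_neg (fun h => hne h.symm), hu1l]
  rw [show (updP u2 l (Int.gcd (u2 (inl l)) (u2 (inr l)) : ℤ) 0) =
      updP u2 l (Int.gcd (x k) (x l) : ℤ) 0 from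
    updP_congr (by rw [e1, e2, Int.gcd_comm]) rfl] at s3
  have hfin : updP u2 l (Int.gcd (x k) (x l) : ℤ) 0 =
      Function.update (Function.update u (inl k) (Int.gcd (x k) (q * x l) : ℤ))
        (inl l) (Int.gcd (x k) (x l) : ℤ) := by
    funext z
    rcases z with j | j
    · rw [updP_inl]
      by_cases hjl : j = l
      · subst hjl; rw [if_pos rfl, Function.update_self]
      · rw [if_neg hjl, Function.update_of_ne (by simpa using hjl), hu2def, updP_inl]
        by_cases hjk : j = k
        · subst hjk; rw [if_pos rfl, Function.update_self, hu1inl, hu1k]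
        · rw [if_neg hjk, Function.update_of_ne (by simpa using hjk), hu1inl, hxdef]
    · rw [updP_inr, Function.update_of_ne (by simp), Function.update_of_ne (by simp), hy j]
      by_cases hjl : j = l
      · rw [if_pos hjl]
      · rw [if_neg hjl, hu2def, updP_inr]
        by_cases hjk : j = k
        · rw [if_pos hjk]
        · rw [if_neg hjk, hu1o j hjk hjl]
  rw [hfin] at s3
  exact s3

end GM


section Helpers

variable {g : ℕ} {d : ℕ → ℕ}

lemma hF_succ_dvd (u : Fin g ⊕ Fin g → ℤ) (i : ℕ) : hF g d u (i+1) ∣ hF g d u i := by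
  refine Finset.dvd_gcd fun k _ => ?_
  exact ((Finset.gcd_dvd (Finset.mem_univ k)).trans
    (Nat.mul_dvd_mul_right (cf_succ_dvd i (k:ℕ)) _))

lemma hF_mono (u : Fin g ⊕ Fin g → ℤ) {i j : ℕ} (h : i ≤ j) : hF g d u j ∣ hF g d u i := by
  induction j with
  | zero => rw [Nat.le_zero.mp h]
  | succ n ih =>
    rcases Nat.lt_or_ge i (n+1) with h2 | h2
    · exact (hF_succ_dvd u n).trans (ih (by omega))
    · rw [show i = n + 1 by omega]

lemma cf_self (i : ℕ) : cf d i i = d i := by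
  rw [cf_of_ge i i le_rfl, Finset.Icc_self, Finset.prod_singleton]

lemma gcd_mul_helper (a b q : ℤ) (hq : 0 ≤ q) :
    (Int.gcd a (q * b) : ℤ) ∣ q * (Int.gcd a b : ℤ) := by
  have h1 : (Int.gcd a (q * b) : ℤ) ∣ q * a := (Int.gcd_dvd_left _ _).mul_left q
  have h2 : (Int.gcd a (q * b) : ℤ) ∣ q * b := (Int.gcd_dvd_right _ _)
  have h3 := Int.dvd_coe_gcd h1 h2
  rwa [Int.gcd_mul_left, Nat.cast_mul, Int.natAbs_of_nonneg hq] at h3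

end Helpers


section Stage

variable {g : ℕ} {d : ℕ → ℕ}

lemma stage (hd : ∀ n, 0 < d n) (w : Fin g ⊕ Fin g → ℤ) (i : ℕ) (hig : i < g)
    (hy : ∀ j, w (inr j) = 0) (hnn : ∀ j, 0 ≤ w (inl j))
    (hprev : ∀ k : Fin g, (k:ℕ) < i → (hF g d w i : ℤ) ∣ w (inl k))
    (hlast : ∀ _ : 1 ≤ i, w (inl ⟨i-1, by omega⟩) = (hF g d w i : ℤ)) :
    ∃ v, Rel g d w v ∧ (∀ j, v (inr j) = 0) ∧ (∀ j, 0 ≤ v (inl j)) ∧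
      (∀ k : Fin g, (k:ℕ) < i → v (inl k) = w (inl k)) ∧
      v (inl ⟨i, hig⟩) = (hF g d w (i+1) : ℤ) := by
  set k0 : Fin g := ⟨i, hig⟩ with hk0
  have hk0v : (k0 : ℕ) = i := rfl
  have inner : ∀ m, i + 1 ≤ m → m ≤ g → ∃ v, Rel g d w v ∧ (∀ j, v (inr j) = 0) ∧
      (∀ j, 0 ≤ v (inl j)) ∧
      (∀ k : Fin g, k ≠ k0 → ((k:ℕ) < i + 1 ∨ m ≤ (k:ℕ)) → v (inl k) = w (inl k)) ∧
      ((hF g d w (i+1) : ℤ) ∣ v (inl k0)) ∧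
      (∀ k : Fin g, i < (k:ℕ) → (k:ℕ) < m → v (inl k0) ∣
        (cf d (i+1) (k:ℕ) : ℤ) * v (inl k)) := by
    intro m
    induction m with
    | zero => omega
    | succ m ih =>
      intro _ hm1
      rcases Nat.lt_or_ge m (i+1) with hbase | hstep
      · -- base case : m + 1 = i + 1, v = w
        have hmi : m = i := by omega
        refine ⟨w, Rel.refl w, hy, hnn, fun k _ _ => rfl, ?_, fun k h1 h2 => by omega⟩
        have h := hF_dvd_inl (d := d) w (i+1) k0
        rwa [hk0v, cf_of_le (i+1) i le_rfl, Nat.cast_one, one_mul] at h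
      · -- inductive step : apply the gcd move to (k0, km)
        obtain ⟨v, hrel, hY, hNN, hUT, hDvd, hG⟩ := ih hstep (by omega)
        set km : Fin g := ⟨m, by omega⟩ with hkm
        have hkmv : (km : ℕ) = m := rfl
        have hne : k0 ≠ km := Fin.ne_of_val_ne (by omega)
        have hmove := rel_gm (d := d) v k0 km (by omega) hY
        set q : ℤ := ((∏ n ∈ Finset.Icc ((k0:ℕ)+1) (km:ℕ), d n : ℕ) : ℤ) with hq
        have hq0 : 0 ≤ q := by positivity
        have hcfq : (cf d (i+1) m : ℤ) = q := by
          rw [hq, cf_of_ge (i+1) m hstep]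
        set G1 : ℤ := (Int.gcd (v (inl k0)) (q * v (inl km)) : ℤ) with hG1
        set G2 : ℤ := (Int.gcd (v (inl k0)) (v (inl km)) : ℤ) with hG2
        set v' := Function.update (Function.update v (inl k0) G1) (inl km) G2 with hv'
        have hv'k0 : v' (inl k0) = G1 := by
          rw [hv', Function.update_of_ne (by simp [hne]), Function.update_self]
        have hv'km : v' (inl km) = G2 := by rw [hv', Function.update_self]
        have hv'o : ∀ k : Fin g, k ≠ k0 → k ≠ km → v' (inl k) = v (inl k) := by
          intro k h1 h2
          rw [hv', Function.update_of_ne (by simp [h2]), Function.update_of_ne (by simp [h1])]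
        have hv'inr : ∀ j, v' (inr j) = v (inr j) := by
          intro j
          rw [hv', Function.update_of_ne (by simp), Function.update_of_ne (by simp)]
        have hvkm : v (inl km) = w (inl km) := hUT km (Ne.symm hne) (Or.inr le_rfl)
        refine ⟨v', hrel.trans hmove, fun j => (hv'inr j).trans (hY j), ?_, ?_, ?_, ?_⟩
        · -- nonnegativity
          intro j
          rcases eq_or_ne j km with rfl | h2
          · rw [hv'km, hG2]; positivity
          rcases eq_or_ne j k0 with rfl | h1
          · rw [hv'k0, hG1]; positivity
          · rw [hv'o j h1 h2]; exact hNN j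
        · -- untouched
          intro k h1 h2
          have h3 : k ≠ km := Fin.ne_of_val_ne (by omega)
          rw [hv'o k h1 h3]
          exact hUT k h1 (by omega)
        · -- hF w (i+1) divides v' (inl k0)
          rw [hv'k0, hG1]
          refine Int.dvd_coe_gcd hDvd ?_
          have h := hF_dvd_inl (d := d) w (i+1) km
          rw [hkmv, hcfq, hvkm] at *
          exact h.trans (dvd_refl _)
        · -- processed divisibilities
          intro k h1 h2
          rcases eq_or_ne k km with rfl | h3
          · rw [hv'k0, hv'km, hkmv, hcfq, hG1, hG2]
            exact gcd_mul_helper _ _ q hq0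
          · have h4 : (k : ℕ) < m := by
              rcases Nat.lt_or_ge (k:ℕ) m with h' | h'
              · exact h'
              · exact absurd (Fin.ext (by omega : (k:ℕ) = (km:ℕ))) h3
            have h5 : k ≠ k0 := Fin.ne_of_val_ne (by omega)
            rw [hv'k0, hv'o k h5 h3]
            refine dvd_trans ?_ (hG k h1 h4)
            rw [hG1]
            exact (Int.gcd_dvd_left _ _)
  -- end of the inner loop
  obtain ⟨v1, hrel1, hY1, hNN1, hUT1, hDvd1, hG1⟩ := inner g (by omega) le_rfl
  have final : ∀ v2, Rel g d w v2 → (∀ j, v2 (inr j) = 0) → (∀ j, 0 ≤ v2 (inl j)) →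
      (∀ k : Fin g, (k:ℕ) < i → v2 (inl k) = w (inl k)) →
      ((hF g d w (i+1) : ℤ) ∣ v2 (inl k0)) →
      (∀ k : Fin g, i < (k:ℕ) → v2 (inl k0) ∣ (cf d (i+1) (k:ℕ) : ℤ) * v2 (inl k)) →
      (∀ k : Fin g, (k:ℕ) < i → v2 (inl k0) ∣ w (inl k)) →
      ∃ v, Rel g d w v ∧ (∀ j, v (inr j) = 0) ∧ (∀ j, 0 ≤ v (inl j)) ∧
        (∀ k : Fin g, (k:ℕ) < i → v (inl k) = w (inl k)) ∧
        v (inl ⟨i, hig⟩) = (hF g d w (i+1) : ℤ) := by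
    intro v2 hrel hY hNN hUTi hA hGi hWi
    refine ⟨v2, hrel, hY, hNN, hUTi, ?_⟩
    have hinv : hF g d w (i+1) = hF g d v2 (i+1) := Rel.hF_eq hd hrel (i+1) (by omega)
    have hα0 : 0 ≤ v2 (inl k0) := hNN k0
    have hcast : ((v2 (inl k0)).natAbs : ℤ) = v2 (inl k0) := Int.natAbs_of_nonneg hα0
    have hB : (v2 (inl k0)).natAbs ∣ hF g d v2 (i+1) := by
      refine dvd_hF v2 (i+1) fun k => ⟨?_, ?_⟩
      · rw [hcast]
        rcases Nat.lt_trichotomy (k : ℕ) i with h1 | h1 | h1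
        · rw [cf_of_le (i+1) (k:ℕ) (by omega), Nat.cast_one, one_mul, hUTi k h1]
          exact hWi k h1
        · have hk : k = k0 := Fin.ext (by omega)
          rw [hk, hk0v, cf_of_le (i+1) i le_rfl, Nat.cast_one, one_mul]
        · exact hGi k h1
      · rw [hY k, mul_zero]
        exact dvd_zero _
    rw [← hinv] at hB
    have hB' : v2 (inl k0) ∣ (hF g d w (i+1) : ℤ) := by
      rw [← hcast]
      exact Int.natCast_dvd_natCast.mpr hB
    exact Int.dvd_antisymm hα0 (by positivity) hB' hA
  rcases Nat.eq_zero_or_pos i with hi0 | hi1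
  · -- i = 0 : no further move needed
    exact final v1 hrel1 hY1 hNN1 (fun k hk => absurd hk (by omega)) hDvd1
      (fun k h1 => hG1 k h1 k.isLt) (fun k hk => absurd hk (by omega))
  · -- i ≥ 1 : one more gcd move fixing the previous coordinate
    set k0' : Fin g := ⟨i-1, by omega⟩ with hk0'
    have hk0'v : (k0' : ℕ) = i - 1 := rfl
    have hne' : k0' ≠ k0 := Fin.ne_of_val_ne (by simp [hk0'v, hk0v]; omega)
    have hmove2 := rel_gm (d := d) v1 k0' k0 (by rw [hk0'v, hk0v]; omega) hY1
    set q' : ℤ := ((∏ n ∈ Finset.Icc ((k0':ℕ)+1) (k0:ℕ), d n : ℕ) : ℤ) with hq'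
    have hq'd : q' = (d i : ℤ) := by
      rw [hq', hk0'v, hk0v, show i - 1 + 1 = i by omega, Finset.Icc_self,
        Finset.prod_singleton]
    have hv1k0' : v1 (inl k0') = (hF g d w i : ℤ) := by
      rw [hUT1 k0' hne' (Or.inl (by omega))]
      exact hlast hi1
    set G1' : ℤ := (Int.gcd (v1 (inl k0')) (q' * v1 (inl k0)) : ℤ) with hG1'
    set G2' : ℤ := (Int.gcd (v1 (inl k0')) (v1 (inl k0)) : ℤ) with hG2'
    set v2 := Function.update (Function.update v1 (inl k0') G1') (inl k0) G2' with hv2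
    have hv2k0 : v2 (inl k0) = G2' := by rw [hv2, Function.update_self]
    have hv2k0' : v2 (inl k0') = G1' := by
      rw [hv2, Function.update_of_ne (by simp [hne']), Function.update_self]
    have hv2o : ∀ k : Fin g, k ≠ k0' → k ≠ k0 → v2 (inl k) = v1 (inl k) := by
      intro k h1 h2
      rw [hv2, Function.update_of_ne (by simp [h2]), Function.update_of_ne (by simp [h1])]
    have hv2inr : ∀ j, v2 (inr j) = v1 (inr j) := by
      intro j
      rw [hv2, Function.update_of_ne (by simp), Function.update_of_ne (by simp)]
    have hdivi : (hF g d w i : ℤ) ∣ q' * v1 (inl k0) := by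
      have hinv1 : hF g d w i = hF g d v1 i := Rel.hF_eq hd hrel1 i hi1
      have h := hF_dvd_inl (d := d) v1 i k0
      rw [hk0v, cf_self] at h
      rw [hinv1, hq'd]
      exact h
    have hG1'eq : G1' = (hF g d w i : ℤ) := by
      rw [hG1', hv1k0']
      refine Int.dvd_antisymm (by positivity) (by positivity) (Int.gcd_dvd_left _ _)
        (Int.dvd_coe_gcd dvd_rfl ?_)
      rw [← hv1k0']
      rw [hv1k0']
      exact hdivi
    have hαdvdHi : G2' ∣ (hF g d w i : ℤ) := by
      rw [hG2', ← hv1k0']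
      exact (Int.gcd_dvd_left _ _)
    refine final v2 (hrel1.trans hmove2) (fun j => (hv2inr j).trans (hY1 j)) ?_ ?_ ?_ ?_ ?_
    · intro j
      rcases eq_or_ne j k0 with rfl | h2
      · rw [hv2k0, hG2']; positivity
      rcases eq_or_ne j k0' with rfl | h1
      · rw [hv2k0', hG1']; positivity
      · rw [hv2o j h1 h2]; exact hNN1 j
    · intro k hk
      rcases eq_or_ne k k0' with rfl | h1
      · rw [hv2k0', hG1'eq, ← hv1k0', hUT1 k0' hne' (Or.inl (by omega))]
      · have h2 : k ≠ k0 := Fin.ne_of_val_ne (by omega)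
        rw [hv2o k h1 h2]
        exact hUT1 k h2 (Or.inl (by omega))
    · rw [hv2k0, hG2']
      refine Int.dvd_coe_gcd ?_ hDvd1
      rw [hv1k0']
      exact Int.natCast_dvd_natCast.mpr (hF_succ_dvd w i)
    · intro k h1
      have h2 : k ≠ k0 := Fin.ne_of_val_ne (by omega)
      have h3 : k ≠ k0' := Fin.ne_of_val_ne (by omega)
      rw [hv2k0, hv2o k h3 h2]
      exact dvd_trans (by rw [hG2']; exact (Int.gcd_dvd_right _ _)) (hG1 k h1 k.isLt)
    · intro k hk
      rw [hv2k0]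
      exact dvd_trans hαdvdHi (hprev k hk)

end Stage


section Canon

variable {g : ℕ} {d : ℕ → ℕ}

lemma rel_zero (u : Fin g ⊕ Fin g → ℤ) :
    ∃ u', Rel g d u u' ∧ (∀ j, u' (inr j) = 0) ∧ (∀ j, 0 ≤ u' (inl j)) := by
  have main : ∀ m, ∃ u', Rel g d u u' ∧
      ∀ j : Fin g, (j:ℕ) < m → (u' (inr j) = 0 ∧ 0 ≤ u' (inl j)) := by
    intro m
    induction m with
    | zero => exact ⟨u, Rel.refl u, fun j h => absurd h (by omega)⟩
    | succ m ih =>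
      obtain ⟨u', hrel, hp⟩ := ih
      by_cases hm : m < g
      · set k : Fin g := ⟨m, hm⟩ with hk
        have hkv : (k : ℕ) = m := rfl
        refine ⟨updP u' k (Int.gcd (u' (inl k)) (u' (inr k)) : ℤ) 0,
          hrel.trans (rel_pair u' k), fun j hj => ?_⟩
        rcases eq_or_ne j k with rfl | hne
        · rw [updP_inl, updP_inr, if_pos rfl, if_pos rfl]
          exact ⟨rfl, by positivity⟩
        · rw [updP_inl, updP_inr, if_neg hne, if_neg hne]
          exact hp j (by
            rcases Nat.lt_or_ge (j:ℕ) m with h' | h'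
            · exact h'
            · exact absurd (Fin.ext (by rw [hkv]; omega : (j:ℕ) = (k:ℕ))) hne)
      · exact ⟨u', hrel, fun j hj => hp j (by have := j.isLt; omega)⟩
  obtain ⟨u', hrel, hp⟩ := main g
  exact ⟨u', hrel, fun j => (hp j j.isLt).1, fun j => (hp j j.isLt).2⟩

/-- every vector is equivalent to the canonical vector of its invariants. -/
lemma rel_canon (hd : ∀ n, 0 < d n) (u : Fin g ⊕ Fin g → ℤ) :
    Rel g d u (Sum.elim (fun k : Fin g => (hF g d u ((k:ℕ)+1) : ℤ)) 0) := by
  obtain ⟨u1, hrel1, hy1, hnn1⟩ := rel_zero (d := d) u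
  have outer : ∀ i, i ≤ g → ∃ w, Rel g d u1 w ∧ (∀ j, w (inr j) = 0) ∧
      (∀ j, 0 ≤ w (inl j)) ∧
      (∀ k : Fin g, (k:ℕ) < i → w (inl k) = (hF g d u1 ((k:ℕ)+1) : ℤ)) := by
    intro i
    induction i with
    | zero => exact fun _ => ⟨u1, Rel.refl u1, hy1, hnn1, fun k h => absurd h (by omega)⟩
    | succ i ih =>
      intro hig'
      have hig : i < g := by omega
      obtain ⟨w, hrelw, hyw, hnnw, hvals⟩ := ih (by omega)
      have hFw : ∀ j, 1 ≤ j → hF g d w j = hF g d u1 j :=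
        fun j hj => (Rel.hF_eq hd hrelw j hj).symm
      have hprev : ∀ k : Fin g, (k:ℕ) < i → (hF g d w i : ℤ) ∣ w (inl k) := by
        intro k hk
        rw [hvals k hk, hFw i (by omega)]
        exact Int.natCast_dvd_natCast.mpr (hF_mono u1 (by omega : (k:ℕ)+1 ≤ i))
      have hlast : ∀ _ : 1 ≤ i, w (inl ⟨i-1, by omega⟩) = (hF g d w i : ℤ) := by
        intro hi1
        rw [hvals ⟨i-1, by omega⟩ (by simp; omega), hFw i hi1]
        congr 2
        simp
        omega
      obtain ⟨v, hrelv, hyv, hnnv, huts, hval⟩ := stage hd w i hig hyw hnnw hprev hlast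
      refine ⟨v, hrelw.trans hrelv, hyv, hnnv, fun k hk => ?_⟩
      rcases Nat.lt_or_ge (k:ℕ) i with h' | h'
      · rw [huts k h', hvals k h']
      · have hk' : k = ⟨i, hig⟩ := Fin.ext (by rw [show ((⟨i, hig⟩ : Fin g) : ℕ) = i from rfl]; omega)
        rw [hk', hval, hFw (i+1) (by omega)]
  obtain ⟨w, hrelw, hyw, _, hvals⟩ := outer g le_rfl
  have hfin : w = Sum.elim (fun k : Fin g => (hF g d u ((k:ℕ)+1) : ℤ)) 0 := by
    funext x
    rcases x with k | k
    · rw [Sum.elim_inl, hvals k k.isLt,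
        Rel.hF_eq hd hrel1 ((k:ℕ)+1) (by omega)]
    · rw [Sum.elim_inr, hyw k, Pi.zero_apply]
  exact hrel1.trans (hfin ▸ hrelw)

end Canon


end Paramod

open Paramod

namespace Paramod

lemma gcd_Icc_eq (g : ℕ) (f : ℕ → ℕ) :
    (Finset.Icc 1 g).gcd f = Finset.univ.gcd (fun k : Fin g => f ((k:ℕ)+1)) := by
  apply Nat.dvd_antisymm
  · refine Finset.dvd_gcd fun k _ => ?_
    show (Finset.Icc 1 g).gcd f ∣ f ((k:ℕ)+1)
    exact Finset.gcd_dvd (Finset.mem_Icc.mpr ⟨by omega, by have := k.isLt; omega⟩)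
  · refine Finset.dvd_gcd fun j hj => ?_
    rw [Finset.mem_Icc] at hj
    have h := Finset.gcd_dvd (f := fun k : Fin g => f ((k:ℕ)+1))
      (Finset.mem_univ (⟨j-1, by omega⟩ : Fin g))
    have h2 : ((⟨j-1, by omega⟩ : Fin g) : ℕ) + 1 = j := by
      rw [show ((⟨j-1, by omega⟩ : Fin g) : ℕ) = j - 1 from rfl]; omega
    have h3 : (Finset.univ.gcd fun k : Fin g => f ((k:ℕ)+1)) ∣
        f (((⟨j-1, by omega⟩ : Fin g) : ℕ) + 1) := h
    rwa [h2] at h3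

lemma vhat_eq_hF (g : ℕ) (d : ℕ → ℕ) (v : (Fin g ⊕ Fin g) → ℤ) (i : ℕ) (hi : 1 ≤ i) :
    vhat g d (ofSum g v) i = hF g d v i := by
  rw [vhat, gcd_Icc_eq]
  refine Finset.gcd_congr rfl fun k _ => ?_
  have hkg := k.isLt
  have h1 : ofSum g v ((k:ℕ)+1) = v (inl k) := by
    rw [ofSum, dif_pos ⟨by omega, by omega⟩]
    exact congrArg (fun t => v (inl t)) (Fin.ext (by
      rw [show ((⟨(k:ℕ)+1-1, by omega⟩ : Fin g) : ℕ) = (k:ℕ)+1-1 from rfl]; omega))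
  have h2 : ofSum g v (g + ((k:ℕ)+1)) = v (inr k) := by
    rw [ofSum, dif_neg (by omega), dif_pos ⟨by omega, by omega⟩]
    exact congrArg (fun t => v (inr t)) (Fin.ext (by
      rw [show ((⟨g + ((k:ℕ)+1) - g - 1, by omega⟩ : Fin g) : ℕ) = g + ((k:ℕ)+1) - g - 1
        from rfl]
      omega))
  rw [h1, h2]
  by_cases h : (k:ℕ) + 1 ≤ i
  · rw [if_pos h, cf_of_le i (k:ℕ) h, one_mul]
  · rw [if_neg h, cf_of_ge i (k:ℕ) (by omega), Nat.add_sub_cancel]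

end Paramod

open Matrix

/-- Two primitive vectors are in the same `Γ̃_pol`-orbit iff `v̂_i = ŵ_i`
for all `i = 1, …, g`; in particular, if `w = vM` with `M ∈ Γ̃_pol` then
`v̂_j ∣ ŵ_j` for all `j`. -/
theorem orbits_paramodular (g : ℕ) (hg : 1 ≤ g) (d : ℕ → ℕ) (hd : ∀ n, 0 < d n)
    (Δ : Matrix (Fin g) (Fin g) ℤ)
    (hΔ : Δ = Matrix.diagonal fun i : Fin g => ((∏ n ∈ Finset.Icc 1 (i : ℕ), d n : ℕ) : ℤ))
    (Λ : Matrix (Fin g ⊕ Fin g) (Fin g ⊕ Fin g) ℤ)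
    (hΛ : Λ = Matrix.fromBlocks 0 Δ (-Δ) 0)
    (v w : (Fin g ⊕ Fin g) → ℤ)
    (hv : Finset.univ.gcd (fun a => (v a).natAbs) = 1)
    (hw : Finset.univ.gcd (fun a => (w a).natAbs) = 1) :
    ((∃ M : Matrix (Fin g ⊕ Fin g) (Fin g ⊕ Fin g) ℤ,
        M.det = 1 ∧ M * Λ * Mᵀ = Λ ∧ Matrix.vecMul v M = w) ↔
      (∀ i, 1 ≤ i → i ≤ g → vhat g d (ofSum g v) i = vhat g d (ofSum g w) i)) ∧
    (∀ M : Matrix (Fin g ⊕ Fin g) (Fin g ⊕ Fin g) ℤ,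
        M.det = 1 → M * Λ * Mᵀ = Λ → Matrix.vecMul v M = w →
        ∀ j, 1 ≤ j → j ≤ g → vhat g d (ofSum g v) j ∣ vhat g d (ofSum g w) j) := by
  have hDe : Δ = De g d := by rw [hΔ]; rfl
  have hLa : Λ = La g d := by rw [hΛ, hDe]; rfl
  constructor
  · constructor
    · rintro ⟨M, h1, h2, h3⟩ i hi1 hig
      rw [vhat_eq_hF g d v i hi1, vhat_eq_hF g d w i hi1]
      exact Rel.hF_eq hd ⟨M, ⟨h1, by rwa [hLa] at h2⟩, h3⟩ i hi1
    · intro h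
      have hcv := rel_canon hd v
      have hcw := rel_canon hd w
      have heq : (Sum.elim (fun k : Fin g => (hF g d v ((k:ℕ)+1) : ℤ)) (0 : Fin g → ℤ)) =
          (Sum.elim (fun k : Fin g => (hF g d w ((k:ℕ)+1) : ℤ)) (0 : Fin g → ℤ)) := by
        funext x
        rcases x with k | k
        · have hk := k.isLt
          have := h ((k:ℕ)+1) (by omega) (by omega)
          rw [vhat_eq_hF g d v ((k:ℕ)+1) (by omega),
            vhat_eq_hF g d w ((k:ℕ)+1) (by omega)] at this
          simp [this]
        · rfl
      obtain ⟨M, ⟨h1, h2⟩, h3⟩ := hcv.trans (heq ▸ hcw.symm)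
      exact ⟨M, h1, by rwa [hLa], h3⟩
  · intro M h1 h2 h3 j hj1 hjg
    rw [vhat_eq_hF g d v j hj1, vhat_eq_hF g d w j hj1, ← h3]
    exact hF_dvd_of_grp hd ⟨h1, by rwa [hLa] at h2⟩ v j hj1
end
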